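/- arXiv:math/9712258 — 2 statements merged into one kernel-verified Lean document; each statement's English description precedes it below -/
import Mathlib

section
/- For every ζ in S∞ there exist a permutation u in S∞ and an integer k ≥ 1 with u ≤_k ζ·u; moreover, the quantity ℓ(ζ·u) − ℓ(u) is the same for every pair (u, k) with u ≤_k ζ·u. Consequently, the function ℓ_u(ζ) := ℓ(ζ·u) − ℓ(u) is well defined on S∞. -/
/-
Common definitions for "A Monoid for the universal k-Bruhat order"
(Bergeron–Sottile).

`S∞` is modeled as `Equiv.Perm ℕ+`; membership in `S∞` (finite support)
is the predicate `FinSupp`.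
-/

noncomputable section

open scoped Classical

/-- `S∞`: permutations of the positive integers `{1,2,3,...}`. -/
abbrev Sinf : Type := Equiv.Perm ℕ+

/-- A permutation belongs to `S∞` iff it moves only finitely many points. -/
def FinSupp (w : Sinf) : Prop := {i : ℕ+ | w i ≠ i}.Finite

/-- `ℓ(w)`: the number of inversions, i.e. pairs `i < j` with `w i > w j`. -/
def len (w : Sinf) : ℕ := {p : ℕ+ × ℕ+ | p.1 < p.2 ∧ w p.2 < w p.1}.ncard

/-- The cover relation of the `k`-Bruhat order: `w` covers `u` iff
`ℓ(w) = ℓ(u) + 1` and `w = u·(a b)` for some `a ≤ k < b`. -/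
def kCover (k : ℕ+) (u w : Sinf) : Prop :=
  len w = len u + 1 ∧ ∃ a b : ℕ+, a ≤ k ∧ k < b ∧ w = u * Equiv.swap a b

/-- The `k`-Bruhat order `≤ₖ`: the partial order generated by `kCover`. -/
def kBruhat (k : ℕ+) : Sinf → Sinf → Prop := Relation.ReflTransGen (kCover k)

/-- `ℓᵤ(ζ) = ℓ(ζu) − ℓ(u)` for any (some chosen) `u ∈ S∞`, `k` with `u ≤ₖ ζu`. -/
def ellU (ζ : Sinf) : ℕ :=
  if h : ∃ p : Sinf × ℕ+, FinSupp p.1 ∧ kBruhat p.2 p.1 (ζ * p.1) then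
    len (ζ * h.choose.1) - len h.choose.1
  else 0

/-- `ℚ[S∞]` as a `ℚ`-vector space with basis the permutations. -/
abbrev QS : Type := Sinf →₀ ℚ

/-- The operator `û_{αβ}` on `ℚ[S∞]`: on a basis permutation `ζ` it gives
`(α β)·ζ` if `ℓᵤ((α β)ζ) = ℓᵤ(ζ) + 1`, and `0` otherwise. -/
def uhat (α β : ℕ+) : QS →ₗ[ℚ] QS :=
  Finsupp.lsum ℚ (fun ζ : Sinf =>
    LinearMap.toSpanSingleton ℚ QS
      (if ellU (Equiv.swap α β * ζ) = ellU ζ + 1 then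
        Finsupp.single (Equiv.swap α β * ζ) (1 : ℚ)
      else 0))

/-- Index type for the generators `u_{αβ}`, `0 < α < β`. -/
abbrev Gen : Type := {p : ℕ+ × ℕ+ // p.1 < p.2}

/-- For `L = [(α₁,β₁),…,(αₙ,βₙ)]`, the composition `û_{αₙβₙ}∘⋯∘û_{α₁β₁}`
(the operator `û_{α₁β₁}` acts first). -/
def wordOp (L : List Gen) : QS →ₗ[ℚ] QS :=
  L.foldl (fun f p => (uhat p.val.1 p.val.2).comp f) LinearMap.id

/-- The universal `k`-Bruhat order `≼`. -/
def uBruhat (η ζ : Sinf) : Prop :=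
  ∃ u : Sinf, FinSupp u ∧ ∃ k : ℕ+, kBruhat k u (η * u) ∧ kBruhat k (η * u) (ζ * u)

/-- `ζ` covers `η` in `≼`. -/
def uCover (η ζ : Sinf) : Prop :=
  uBruhat η ζ ∧ η ≠ ζ ∧ ∀ ξ : Sinf, uBruhat η ξ → uBruhat ξ ζ → ξ = η ∨ ξ = ζ

/-- `up(ζ) = {j : ζ⁻¹(j) < j}`. -/
def upS (ζ : Sinf) : Set ℕ+ := {j | ζ⁻¹ j < j}

/-- `dw(ζ) = {j : ζ⁻¹(j) > j}`. -/
def dwS (ζ : Sinf) : Set ℕ+ := {j | j < ζ⁻¹ j}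

/-- `R_u(ζ)`: the `u`-reduced sequences for `ζ`, i.e. sequences
`((α₁,β₁),…,(αₙ,βₙ))` with `û_{αₙβₙ}∘⋯∘û_{α₁β₁}(1) = ζ`. -/
def Rset (ζ : Sinf) : Set (List Gen) :=
  {L | wordOp L (Finsupp.single 1 1) = Finsupp.single ζ 1}

/-- `H_p(ζ)`: empty if some `pᵢ < 0`; otherwise those `u`-reduced sequences for `ζ`
whose `α`'s strictly increase within each consecutive block of sizes `p₁,…,p_r`
(indices `i, i+1` lie in the same block iff `i+1` is not a partial sum of `p`). -/
def Hset (p : List ℤ) (ζ : Sinf) : Set (List Gen) :=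
  {L | L ∈ Rset ζ ∧ (∀ x ∈ p, 0 ≤ x) ∧
    ∀ (i : ℕ) (q r : Gen), L[i]? = some q → L[i + 1]? = some r →
      (∀ t : ℕ, (p.take t).sum ≠ (i : ℤ) + 1) → q.val.1 < r.val.1}

/-- `E_p(ζ)`: as `H_p(ζ)` but with the `α`'s strictly decreasing in each block. -/
def Eset (p : List ℤ) (ζ : Sinf) : Set (List Gen) :=
  {L | L ∈ Rset ζ ∧ (∀ x ∈ p, 0 ≤ x) ∧
    ∀ (i : ℕ) (q r : Gen), L[i]? = some q → L[i + 1]? = some r →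
      (∀ t : ℕ, (p.take t).sum ≠ (i : ℤ) + 1) → r.val.1 < q.val.1}

/-- `E'_p(ζ)`: as `H_p(ζ)` but with the `β`'s strictly decreasing in each block. -/
def E'set (p : List ℤ) (ζ : Sinf) : Set (List Gen) :=
  {L | L ∈ Rset ζ ∧ (∀ x ∈ p, 0 ≤ x) ∧
    ∀ (i : ℕ) (q r : Gen), L[i]? = some q → L[i + 1]? = some r →
      (∀ t : ℕ, (p.take t).sum ≠ (i : ℤ) + 1) → r.val.2 < q.val.2}

/-- The integer sequence `λ_σ = (λ_{σ(i)} + i − σ(i))ᵢ` (here `0`-indexed). -/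
def lamSeq (r : ℕ) (lam : Fin r → ℕ) (σ : Equiv.Perm (Fin r)) : List ℤ :=
  (List.finRange r).map (fun i => (lam (σ i) : ℤ) + (i : ℤ) - ((σ i : ℕ) : ℤ))

/-- `c_λ^ζ := Σ_{σ ∈ S_r} ε(σ)·|H_{λ_σ}(ζ)|`. -/
def cCoef (r : ℕ) (lam : Fin r → ℕ) (ζ : Sinf) : ℤ :=
  ∑ σ : Equiv.Perm (Fin r),
    ((Equiv.Perm.sign σ : ℤˣ) : ℤ) * ((Hset (lamSeq r lam σ) ζ).ncard : ℤ)

/-- The free monoid-with-zero on the generators `u_{αβ}`. -/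
abbrev FM : Type := WithZero (FreeMonoid Gen)

/-- The generator `u_{αβ}` as an element of `FM`. -/
def g (α β : ℕ+) (h : α < β) : FM :=
  ((FreeMonoid.of (⟨(α, β), h⟩ : Gen) : FreeMonoid Gen) : FM)

/-- The defining relations (1)–(5) of the monoid `M`. -/
inductive MRel : FM → FM → Prop
  | r1 (α β γ δ : ℕ+) (h1 : α < β) (h2 : β < γ) (h3 : γ < δ) :
      MRel (g β γ h2 * g γ δ h3 * g α γ (h1.trans h2))
           (g β δ (h2.trans h3) * g α β h1 * g β γ h2)
  | r2 (α β γ δ : ℕ+) (h1 : α < β) (h2 : β < γ) (h3 : γ < δ) :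
      MRel (g α γ (h1.trans h2) * g γ δ h3 * g β γ h2)
           (g β γ h2 * g α β h1 * g β δ (h2.trans h3))
  | r3a (α β γ δ : ℕ+) (h1 : α < β) (h2 : γ < δ) (h : β < γ) :
      MRel (g α β h1 * g γ δ h2) (g γ δ h2 * g α β h1)
  | r3b (α β γ δ : ℕ+) (h1 : α < β) (h2 : γ < δ) (h3 : α < γ) (h4 : δ < β) :
      MRel (g α β h1 * g γ δ h2) (g γ δ h2 * g α β h1)
  | r4a (α β γ δ : ℕ+) (h1 : α ≤ β) (h2 : β < γ) (h3 : γ ≤ δ) :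
      MRel (g α γ (h1.trans_lt h2) * g β δ (h2.trans_le h3)) 0
  | r4b (α β γ δ : ℕ+) (h1 : α ≤ β) (h2 : β < γ) (h3 : γ ≤ δ) :
      MRel (g β δ (h2.trans_le h3) * g α γ (h1.trans_lt h2)) 0
  | r5a (α β γ : ℕ+) (h1 : α < β) (h2 : β < γ) :
      MRel (g β γ h2 * g α β h1 * g β γ h2) 0
  | r5b (α β γ : ℕ+) (h1 : α < β) (h2 : β < γ) :
      MRel (g α β h1 * g β γ h2 * g α β h1) 0

/-- The congruence generated by the relations (1)–(5); the monoid `M` is its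
quotient `MCon.Quotient`. -/
def MCon : Con FM := conGen MRel

/-- The word `u_{αₙβₙ}⋯u_{α₁β₁} ∈ FM` for `L = [(α₁,β₁),…,(αₙ,βₙ)]`. -/
def wordFM (L : List Gen) : FM :=
  ((FreeMonoid.ofList L.reverse : FreeMonoid Gen) : FM)

/-- The generator `u_{αβ}` in the free monoid (no zero). -/
def g3 (α β : ℕ+) (h : α < β) : FreeMonoid Gen := FreeMonoid.of ⟨(α, β), h⟩

/-- The relations (1)–(3) only, on the free monoid (no zero). -/
inductive MRel3 : FreeMonoid Gen → FreeMonoid Gen → Prop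
  | r1 (α β γ δ : ℕ+) (h1 : α < β) (h2 : β < γ) (h3 : γ < δ) :
      MRel3 (g3 β γ h2 * g3 γ δ h3 * g3 α γ (h1.trans h2))
            (g3 β δ (h2.trans h3) * g3 α β h1 * g3 β γ h2)
  | r2 (α β γ δ : ℕ+) (h1 : α < β) (h2 : β < γ) (h3 : γ < δ) :
      MRel3 (g3 α γ (h1.trans h2) * g3 γ δ h3 * g3 β γ h2)
            (g3 β γ h2 * g3 α β h1 * g3 β δ (h2.trans h3))
  | r3a (α β γ δ : ℕ+) (h1 : α < β) (h2 : γ < δ) (h : β < γ) :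
      MRel3 (g3 α β h1 * g3 γ δ h2) (g3 γ δ h2 * g3 α β h1)
  | r3b (α β γ δ : ℕ+) (h1 : α < β) (h2 : γ < δ) (h3 : α < γ) (h4 : δ < β) :
      MRel3 (g3 α β h1 * g3 γ δ h2) (g3 γ δ h2 * g3 α β h1)

/-- The word (with letters `(αᵢ,βᵢ)`) encoding a maximal chain of `[u,w]ₖ`:
there are permutations `u = u₀ <ₖ u₁ <ₖ ⋯ <ₖ uₙ = w` (each step a `k`-Bruhat
cover) with `uᵢ₊₁ = (αᵢ₊₁ βᵢ₊₁)·uᵢ`. -/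
def IsChainWord (k : ℕ+) (u w : Sinf) (L : List Gen) : Prop :=
  ∃ c : ℕ → Sinf, c 0 = u ∧ c L.length = w ∧
    ∀ (i : ℕ) (q : Gen), L[i]? = some q →
      kCover k (c i) (c (i + 1)) ∧ c (i + 1) = Equiv.swap q.val.1 q.val.2 * c i

/-- For an order-preserving `f`, the induced map on generators
`(α,β) ↦ (f α, f β)`. -/
def genMap (f : ℕ+ → ℕ+) (p : Gen) : Gen :=
  if h : f p.val.1 < f p.val.2 then ⟨(f p.val.1, f p.val.2), h⟩ else p

/-- For an order-reversing `f`, the induced map on generators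
`(α,β) ↦ (f β, f α)`. -/
def vmapGen (f : ℕ+ → ℕ+) (p : Gen) : Gen :=
  if h : f p.val.2 < f p.val.1 then ⟨(f p.val.2, f p.val.1), h⟩ else p

/-- The map `φ_a : {1,2,…} → {1,2,…}`, `i ↦ i` for `i < a` and `i ↦ i+1` for `i ≥ a`. -/
def phiF (a : ℕ+) (i : ℕ+) : ℕ+ := if i < a then i else i + 1

end
noncomputable section
namespace BS

def Inv (w : Sinf) : Set (ℕ+ × ℕ+) := {p : ℕ+ × ℕ+ | p.1 < p.2 ∧ w p.2 < w p.1}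

lemma len_def (w : Sinf) : len w = (Inv w).ncard := rfl

lemma finSupp_one : FinSupp 1 := by
  simp [FinSupp]

lemma finSupp_mul {u v : Sinf} (hu : FinSupp u) (hv : FinSupp v) : FinSupp (u * v) := by
  have hsub : {i : ℕ+ | (u * v) i ≠ i} ⊆ {i : ℕ+ | v i ≠ i} ∪ (⇑v ⁻¹' {i : ℕ+ | u i ≠ i}) := by
    intro i hi
    by_cases h : v i = i
    · right; simp only [Set.mem_preimage, Set.mem_setOf_eq, h]
      simpa [Equiv.Perm.mul_apply, h] using hi
    · left; exact h
  exact Set.Finite.subset (hv.union (hu.preimage (v.injective.injOn))) hsub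

lemma finSupp_swap (a b : ℕ+) : FinSupp (Equiv.swap a b) := by
  apply Set.Finite.subset (Set.toFinite {a, b})
  intro i hi
  simp only [Set.mem_setOf_eq] at hi
  by_contra hc
  simp only [Set.mem_insert_iff, Set.mem_singleton_iff] at hc
  push_neg at hc
  exact hi (Equiv.swap_apply_of_ne_of_ne hc.1 hc.2)


lemma exists_bound {w : Sinf} (hw : FinSupp w) : ∃ N : ℕ+, ∀ x : ℕ+, N < x → w x = x := by
  obtain ⟨N, hN⟩ := hw.bddAbove
  exact ⟨N, fun x hx => by
    by_contra h
    exact absurd (hN (Set.mem_setOf_eq ▸ h : x ∈ {i : ℕ+ | w i ≠ i})) (not_le.mpr hx)⟩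

lemma bound_closed {w : Sinf} {N : ℕ+} (hN : ∀ x : ℕ+, N < x → w x = x) {x : ℕ+}
    (hx : x ≤ N) : w x ≤ N := by
  by_contra h
  push_neg at h
  have h1 : w (w x) = w x := hN (w x) h
  have hxx := w.injective h1
  rw [hxx] at h
  exact absurd hx (not_le.mpr h)

lemma inv_finite {w : Sinf} (hw : FinSupp w) : (Inv w).Finite := by
  obtain ⟨N, hN⟩ := exists_bound hw
  apply Set.Finite.subset ((Set.finite_Iic N).prod (Set.finite_Iic N))
  rintro ⟨x, y⟩ ⟨hxy, hinv⟩
  simp only [Set.mem_prod, Set.mem_Iic]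
  by_cases hy : y ≤ N
  · exact ⟨le_trans (le_of_lt hxy) hy, hy⟩
  · push_neg at hy
    exfalso
    have hwy : w y = y := hN y hy
    rw [hwy] at hinv
    by_cases hx : x ≤ N
    · exact absurd (lt_of_le_of_lt (bound_closed hN hx) hy) (not_lt.mpr (le_of_lt hinv))
    · push_neg at hx
      rw [hN x hx] at hinv
      exact absurd hxy (not_lt.mpr (le_of_lt hinv))

section swaplen

variable (a b : ℕ+)

def Mid : Set (ℕ+ × ℕ+) := ({a} ×ˢ Set.Ioo a b) ∪ ((Set.Ioo a b) ×ˢ {b})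

def Exc : Set (ℕ+ × ℕ+) := insert (a, b) (Mid a b)

def Gm : ℕ+ × ℕ+ → ℕ+ × ℕ+ := fun p =>
  if Equiv.swap a b p.1 < Equiv.swap a b p.2 then (Equiv.swap a b p.1, Equiv.swap a b p.2)
  else (Equiv.swap a b p.2, Equiv.swap a b p.1)

lemma exc_finite : (Exc a b).Finite := by
  apply Set.Finite.insert
  apply Set.Finite.union
  · exact (Set.finite_singleton a).prod (Set.finite_Ioo a b)
  · exact (Set.finite_Ioo a b).prod (Set.finite_singleton b)

lemma Gm_invol {p : ℕ+ × ℕ+} (hp : p.1 < p.2) : Gm a b (Gm a b p) = p := by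
  obtain ⟨x, y⟩ := p
  simp only at hp
  unfold Gm
  split_ifs with h1 h2 h2 <;>
    simp only [Equiv.swap_apply_self] at * <;>
    first
      | rfl
      | (exfalso; exact absurd hp (not_lt.mpr (le_of_lt h2)))
      | (exfalso; exact absurd hp (not_lt.mpr (le_of_not_gt h2)))


lemma swap_eval_of_ne {a b x : ℕ+} (h1 : x ≠ a) (h2 : x ≠ b) : Equiv.swap a b x = x :=
  Equiv.swap_apply_of_ne_of_ne h1 h2

lemma Gm_step (hab : a < b) {v w : Sinf} (hwv : ∀ x, w x = v (Equiv.swap a b x))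
    {p : ℕ+ × ℕ+} (hpw : p ∈ Inv w) (hpE : p ∉ Exc a b) :
    Gm a b p ∈ Inv v ∧ Gm a b p ∉ Exc a b := by
  obtain ⟨x, y⟩ := p
  obtain ⟨hxy, hinv⟩ := hpw
  simp only at hxy hinv
  have hmem1 : ¬ (x = a ∧ a < y ∧ y < b) := by
    intro ⟨h1, h2, h3⟩
    exact hpE (Set.mem_insert_iff.mpr (Or.inr (Or.inl ⟨h1, h2, h3⟩)))
  have hmem2 : ¬ (a < x ∧ x < b ∧ y = b) := by
    intro ⟨h1, h2, h3⟩
    exact hpE (Set.mem_insert_iff.mpr (Or.inr (Or.inr ⟨⟨h1, h2⟩, h3⟩)))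
  have hnab2 : ¬ (x = a ∧ y = b) := by
    intro ⟨h1, h2⟩; exact hpE (by rw [h1, h2]; exact Set.mem_insert _ _)
  -- sortedness of swapped pair
  have hsort : Equiv.swap a b x < Equiv.swap a b y := by
    by_cases hxa : x = a
    · subst hxa
      have hyb : y ≠ b := fun h => hnab2 ⟨rfl, h⟩
      have hby : b < y := by
        rcases lt_trichotomy y b with h | h | h
        · exact absurd ⟨rfl, hxy, h⟩ hmem1
        · exact absurd h hyb
        · exact h
      rw [Equiv.swap_apply_left, swap_eval_of_ne (ne_of_gt (lt_trans hab hby)) (ne_of_gt hby)]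
      exact hby
    · by_cases hxb : x = b
      · have hby : b < y := hxb ▸ hxy
        have hya : y ≠ a := ne_of_gt (lt_trans hab hby)
        have hyb : y ≠ b := ne_of_gt hby
        rw [hxb, Equiv.swap_apply_right, swap_eval_of_ne hya hyb]
        exact lt_trans hab hby
      · by_cases hya : y = a
        · subst hya
          rw [Equiv.swap_apply_left, swap_eval_of_ne hxa hxb]
          exact lt_trans hxy hab
        · by_cases hyb : y = b
          · subst hyb
            have hxlta : x < a := by
              rcases lt_trichotomy x a with h | h | h
              · exact h
              · exact absurd h hxa
              · exact absurd ⟨h, hxy, rfl⟩ hmem2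
            rw [Equiv.swap_apply_right, swap_eval_of_ne hxa hxb]
            exact hxlta
          · rw [swap_eval_of_ne hxa hxb, swap_eval_of_ne hya hyb]
            exact hxy
  have hG : Gm a b (x, y) = (Equiv.swap a b x, Equiv.swap a b y) := by
    unfold Gm; rw [if_pos hsort]
  rw [hG]
  refine ⟨⟨hsort, ?_⟩, ?_⟩
  · show v (Equiv.swap a b y) < v (Equiv.swap a b x)
    rw [← hwv x, ← hwv y]; exact hinv
  · -- image not in Exc
    intro hmem
    rcases Set.mem_insert_iff.mp hmem with heq | hmid
    · -- (σx, σy) = (a,b)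
      have h1 : Equiv.swap a b x = a := congrArg Prod.fst heq
      have h2 : Equiv.swap a b y = b := congrArg Prod.snd heq
      have hx : x = b := by
        have := congrArg (Equiv.swap a b) h1
        rwa [Equiv.swap_apply_self, Equiv.swap_apply_left] at this
      have hy : y = a := by
        have := congrArg (Equiv.swap a b) h2
        rwa [Equiv.swap_apply_self, Equiv.swap_apply_right] at this
      rw [hx, hy] at hxy
      exact absurd (lt_trans hab hxy) (lt_irrefl _)
    · rcases hmid with ⟨h1, h2⟩ | ⟨h1, h2⟩
      · -- σx = a, σy ∈ Ioo a b
        simp only [Set.mem_singleton_iff, Set.mem_Ioo] at h1 h2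
        have hx : x = b := by
          have := congrArg (Equiv.swap a b) h1
          rwa [Equiv.swap_apply_self, Equiv.swap_apply_left] at this
        have hy : Equiv.swap a b y = y := by
          by_cases hya : y = a
          · subst hya; rw [Equiv.swap_apply_left] at h2; exact absurd h2.2 (lt_irrefl b)
          · by_cases hyb : y = b
            · subst hyb; rw [Equiv.swap_apply_right] at h2; exact absurd h2.1 (lt_irrefl a)
            · exact swap_eval_of_ne hya hyb
        have : y < b := hy ▸ h2.2
        rw [hx] at hxy
        exact absurd (lt_trans hxy this) (lt_irrefl _)
      · -- σx ∈ Ioo, σy = b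
        simp only [Set.mem_singleton_iff, Set.mem_Ioo] at h1 h2
        have hy : y = a := by
          have := congrArg (Equiv.swap a b) h2
          rwa [Equiv.swap_apply_self, Equiv.swap_apply_right] at this
        have hx : Equiv.swap a b x = x := by
          by_cases hxa : x = a
          · subst hxa; rw [Equiv.swap_apply_left] at h1; exact absurd h1.2 (lt_irrefl _)
          · by_cases hxb : x = b
            · subst hxb; rw [Equiv.swap_apply_right] at h1; exact absurd h1.1 (lt_irrefl a)
            · exact swap_eval_of_ne hxa hxb
        have hxa : a < x := hx ▸ h1.1
        rw [hy] at hxy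
        exact absurd (lt_trans hxa hxy) (lt_irrefl _)

lemma len_mul_swap (v : Sinf) (hv : FinSupp v) {a b : ℕ+} (hab : a < b) (hvab : v a < v b) :
    len (v * Equiv.swap a b) = len v + 1 +
      2 * {c : ℕ+ | (a < c ∧ c < b) ∧ v a < v c ∧ v c < v b}.ncard := by
  set w := v * Equiv.swap a b with hw
  have hwv : ∀ x, w x = v (Equiv.swap a b x) := fun x => rfl
  have hvw : ∀ x, v x = w (Equiv.swap a b x) := by
    intro x
    rw [hwv, Equiv.swap_apply_self]
  have hwfin : FinSupp w := finSupp_mul hv (finSupp_swap a b)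
  have hIw : (Inv w).Finite := inv_finite hwfin
  have hIv : (Inv v).Finite := inv_finite hv
  have hEfin : (Exc a b).Finite := exc_finite a b
  have hwa : w a = v b := by rw [hwv, Equiv.swap_apply_left]
  have hwb : w b = v a := by rw [hwv, Equiv.swap_apply_right]
  have hwc : ∀ c : ℕ+, c ≠ a → c ≠ b → w c = v c := by
    intro c h1 h2; rw [hwv, swap_eval_of_ne h1 h2]
  -- the outside-Exc parts are in bijection
  have himg : Inv v \ Exc a b = Gm a b '' (Inv w \ Exc a b) := by
    apply Set.Subset.antisymm
    · intro p hp
      have hstep := Gm_step a b hab hvw ⟨hp.1.1, hp.1.2⟩ hp.2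
      refine ⟨Gm a b p, ⟨hstep.1, hstep.2⟩, ?_⟩
      exact Gm_invol a b hp.1.1
    · rintro q ⟨p, hp, rfl⟩
      exact (Gm_step a b hab hwv ⟨hp.1.1, hp.1.2⟩ hp.2 : _)
  have hinj : Set.InjOn (Gm a b) (Inv w \ Exc a b) := by
    intro p hp q hq h
    have := congrArg (Gm a b) h
    rwa [Gm_invol a b hp.1.1, Gm_invol a b hq.1.1] at this
  have hcard1 : (Inv v \ Exc a b).ncard = (Inv w \ Exc a b).ncard := by
    rw [himg, Set.ncard_image_of_injOn hinj]
  have hsplitw := Set.ncard_inter_add_ncard_diff_eq_ncard (Inv w) (Exc a b) hIw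
  have hsplitv := Set.ncard_inter_add_ncard_diff_eq_ncard (Inv v) (Exc a b) hIv
  -- the intersections
  set S1 : Set ℕ+ := {c | (a < c ∧ c < b) ∧ v c < v b} with hS1
  set S2 : Set ℕ+ := {c | (a < c ∧ c < b) ∧ v a < v c} with hS2
  set T1 : Set ℕ+ := {c | (a < c ∧ c < b) ∧ v c < v a} with hT1
  set T2 : Set ℕ+ := {c | (a < c ∧ c < b) ∧ v b < v c} with hT2
  set M : Set ℕ+ := {c | (a < c ∧ c < b) ∧ v a < v c ∧ v c < v b} with hM
  have hIoo : (Set.Ioo a b).Finite := Set.finite_Ioo a b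
  have hS1f : S1.Finite := hIoo.subset (fun c hc => ⟨hc.1.1, hc.1.2⟩)
  have hS2f : S2.Finite := hIoo.subset (fun c hc => ⟨hc.1.1, hc.1.2⟩)
  have hT1f : T1.Finite := hIoo.subset (fun c hc => ⟨hc.1.1, hc.1.2⟩)
  have hT2f : T2.Finite := hIoo.subset (fun c hc => ⟨hc.1.1, hc.1.2⟩)
  have hMf : M.Finite := hIoo.subset (fun c hc => ⟨hc.1.1, hc.1.2⟩)
  have hiw : Inv w ∩ Exc a b =
      insert (a, b) ((fun c => ((a : ℕ+), c)) '' S1 ∪ (fun c => (c, (b : ℕ+))) '' S2) := by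
    ext ⟨x, y⟩
    constructor
    · rintro ⟨⟨hxy, hinv⟩, hexc⟩
      rcases Set.mem_insert_iff.mp hexc with heq | hmid
      · exact heq ▸ Set.mem_insert _ _
      · rcases hmid with ⟨h1, h2⟩ | ⟨h1, h2⟩
        · simp only [Set.mem_singleton_iff, Set.mem_Ioo] at h1 h2
          subst h1
          apply Set.mem_insert_of_mem
          left
          refine ⟨y, ⟨⟨h2.1, h2.2⟩, ?_⟩, rfl⟩
          have := hwc y (ne_of_gt h2.1) (ne_of_lt h2.2)
          rw [this, hwa] at hinv
          exact hinv
        · simp only [Set.mem_singleton_iff, Set.mem_Ioo] at h1 h2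
          subst h2
          apply Set.mem_insert_of_mem
          right
          refine ⟨x, ⟨⟨h1.1, h1.2⟩, ?_⟩, rfl⟩
          have := hwc x (ne_of_gt h1.1) (ne_of_lt h1.2)
          rw [this, hwb] at hinv
          exact hinv
    · intro hmem
      rcases Set.mem_insert_iff.mp hmem with heq | hmem2
      · rw [heq]
        refine ⟨⟨hab, ?_⟩, Set.mem_insert _ _⟩
        rw [hwa, hwb]; exact hvab
      · rcases hmem2 with ⟨c, hc, heq⟩ | ⟨c, hc, heq⟩
        · obtain ⟨⟨hc1, hc2⟩, hc3⟩ := hc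
          rw [← heq]
          refine ⟨⟨hc1, ?_⟩, Set.mem_insert_of_mem _ (Or.inl ⟨rfl, hc1, hc2⟩)⟩
          rw [hwa, hwc c (ne_of_gt hc1) (ne_of_lt hc2)]
          exact hc3
        · obtain ⟨⟨hc1, hc2⟩, hc3⟩ := hc
          rw [← heq]
          refine ⟨⟨hc2, ?_⟩, Set.mem_insert_of_mem _ (Or.inr ⟨⟨hc1, hc2⟩, rfl⟩)⟩
          rw [hwb, hwc c (ne_of_gt hc1) (ne_of_lt hc2)]
          exact hc3
  have hiv : Inv v ∩ Exc a b =
      (fun c => ((a : ℕ+), c)) '' T1 ∪ (fun c => (c, (b : ℕ+))) '' T2 := by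
    ext ⟨x, y⟩
    constructor
    · rintro ⟨⟨hxy, hinv⟩, hexc⟩
      rcases Set.mem_insert_iff.mp hexc with heq | hmid
      · exfalso
        have h1 : x = a := congrArg Prod.fst heq
        have h2 : y = b := congrArg Prod.snd heq
        rw [h1, h2] at hinv
        exact absurd hvab (not_lt.mpr (le_of_lt hinv))
      · rcases hmid with ⟨h1, h2⟩ | ⟨h1, h2⟩
        · simp only [Set.mem_singleton_iff, Set.mem_Ioo] at h1 h2
          subst h1
          exact Or.inl ⟨y, ⟨⟨h2.1, h2.2⟩, hinv⟩, rfl⟩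
        · simp only [Set.mem_singleton_iff, Set.mem_Ioo] at h1 h2
          subst h2
          exact Or.inr ⟨x, ⟨⟨h1.1, h1.2⟩, hinv⟩, rfl⟩
    · intro hmem
      rcases hmem with ⟨c, hc, heq⟩ | ⟨c, hc, heq⟩
      · obtain ⟨⟨hc1, hc2⟩, hc3⟩ := hc
        rw [← heq]
        exact ⟨⟨hc1, hc3⟩, Set.mem_insert_of_mem _ (Or.inl ⟨rfl, hc1, hc2⟩)⟩
      · obtain ⟨⟨hc1, hc2⟩, hc3⟩ := hc
        rw [← heq]
        exact ⟨⟨hc2, hc3⟩, Set.mem_insert_of_mem _ (Or.inr ⟨⟨hc1, hc2⟩, rfl⟩)⟩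
  -- cardinalities of the intersections
  have hinj1 : Function.Injective (fun c : ℕ+ => ((a : ℕ+), c)) := by
    intro c d h; exact congrArg Prod.snd h
  have hinj2 : Function.Injective (fun c : ℕ+ => (c, (b : ℕ+))) := by
    intro c d h; exact congrArg Prod.fst h
  have hdisjS : Disjoint ((fun c => ((a : ℕ+), c)) '' S1) ((fun c => (c, (b : ℕ+))) '' S2) := by
    rw [Set.disjoint_left]
    rintro p ⟨c, hc, rfl⟩ ⟨d, hd, heq⟩
    have h1 : d = a := (congrArg Prod.fst heq)
    rw [h1] at hd
    exact absurd hd.1.1 (lt_irrefl a)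
  have hdisjT : Disjoint ((fun c => ((a : ℕ+), c)) '' T1) ((fun c => (c, (b : ℕ+))) '' T2) := by
    rw [Set.disjoint_left]
    rintro p ⟨c, hc, rfl⟩ ⟨d, hd, heq⟩
    have h1 : d = a := (congrArg Prod.fst heq)
    rw [h1] at hd
    exact absurd hd.1.1 (lt_irrefl a)
  have hnotmem : (a, b) ∉ (fun c => ((a : ℕ+), c)) '' S1 ∪ (fun c => (c, (b : ℕ+))) '' S2 := by
    rintro (⟨c, hc, heq⟩ | ⟨c, hc, heq⟩)
    · have : c = b := congrArg Prod.snd heq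
      rw [this] at hc
      exact absurd hc.1.2 (lt_irrefl b)
    · have : c = a := congrArg Prod.fst heq
      rw [this] at hc
      exact absurd hc.1.1 (lt_irrefl a)
  have hcw : (Inv w ∩ Exc a b).ncard = 1 + (S1.ncard + S2.ncard) := by
    rw [hiw, Set.ncard_insert_of_notMem hnotmem
        ((hS1f.image _).union (hS2f.image _)),
      Set.ncard_union_eq hdisjS (hS1f.image _) (hS2f.image _),
      Set.ncard_image_of_injective _ hinj1, Set.ncard_image_of_injective _ hinj2]
    omega
  have hcv : (Inv v ∩ Exc a b).ncard = T1.ncard + T2.ncard := by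
    rw [hiv, Set.ncard_union_eq hdisjT (hT1f.image _) (hT2f.image _),
      Set.ncard_image_of_injective _ hinj1, Set.ncard_image_of_injective _ hinj2]
  -- S1 = T1 ⊔ M, S2 = T2 ⊔ M
  have hS1eq : S1 = T1 ∪ M := by
    ext c
    simp only [hS1, hT1, hM, Set.mem_setOf_eq, Set.mem_union]
    constructor
    · rintro ⟨hio, hlt⟩
      rcases lt_trichotomy (v c) (v a) with h | h | h
      · exact Or.inl ⟨hio, h⟩
      · exact absurd (v.injective h) (ne_of_gt hio.1)
      · exact Or.inr ⟨hio, h, hlt⟩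
    · rintro (⟨hio, h⟩ | ⟨hio, h1, h2⟩)
      · exact ⟨hio, lt_trans h hvab⟩
      · exact ⟨hio, h2⟩
  have hS2eq : S2 = T2 ∪ M := by
    ext c
    simp only [hS2, hT2, hM, Set.mem_setOf_eq, Set.mem_union]
    constructor
    · rintro ⟨hio, hlt⟩
      rcases lt_trichotomy (v c) (v b) with h | h | h
      · exact Or.inr ⟨hio, hlt, h⟩
      · exact absurd (v.injective h) (ne_of_lt hio.2)
      · exact Or.inl ⟨hio, h⟩
    · rintro (⟨hio, h⟩ | ⟨hio, h1, h2⟩)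
      · exact ⟨hio, lt_trans hvab h⟩
      · exact ⟨hio, h1⟩
  have hdTM1 : Disjoint T1 M := by
    rw [Set.disjoint_left]
    rintro c ⟨hio, h⟩ ⟨hio2, h1, h2⟩
    exact absurd h1 (not_lt.mpr (le_of_lt h))
  have hdTM2 : Disjoint T2 M := by
    rw [Set.disjoint_left]
    rintro c ⟨hio, h⟩ ⟨hio2, h1, h2⟩
    exact absurd h2 (not_lt.mpr (le_of_lt h))
  have hc1 : S1.ncard = T1.ncard + M.ncard := by
    rw [hS1eq, Set.ncard_union_eq hdTM1 hT1f hMf]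
  have hc2 : S2.ncard = T2.ncard + M.ncard := by
    rw [hS2eq, Set.ncard_union_eq hdTM2 hT2f hMf]
  rw [len_def, len_def]
  omega

def CondI (u : Sinf) (k : ℕ+) (w : Sinf) : Prop :=
  ∀ x : ℕ+, (x ≤ k → u x ≤ w x) ∧ (k < x → w x ≤ u x)

def CondII (u : Sinf) (k : ℕ+) (w : Sinf) : Prop :=
  ∀ x y : ℕ+, x < y → u x < u y → w y < w x → x ≤ k ∧ k < y

lemma cover_anatomy {k : ℕ+} {v w : Sinf} (hv : FinSupp v) (hcov : kCover k v w) :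
    ∃ a b : ℕ+, a ≤ k ∧ k < b ∧ a < b ∧ (∀ x, w x = v (Equiv.swap a b x)) ∧ v a < v b ∧
      (∀ c, a < c → c < b → ¬(v a < v c ∧ v c < v b)) := by
  obtain ⟨hlen, a, b, hak, hkb, heq⟩ := hcov
  have hab : a < b := lt_of_le_of_lt hak hkb
  have heval : ∀ x, w x = v (Equiv.swap a b x) := by
    intro x; rw [heq]; rfl
  have hwfin : FinSupp w := heq ▸ finSupp_mul hv (finSupp_swap a b)
  have hne : v a ≠ v b := fun h => absurd (v.injective h) (ne_of_lt hab)
  have hvab : v a < v b := by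
    rcases lt_or_gt_of_ne hne with h | h
    · exact h
    · exfalso
      have hv_eq : v = w * Equiv.swap a b := by
        rw [heq, mul_assoc, Equiv.swap_mul_self, mul_one]
      have hwa : w a = v b := by rw [heval, Equiv.swap_apply_left]
      have hwb : w b = v a := by rw [heval, Equiv.swap_apply_right]
      have hwab : w a < w b := by rw [hwa, hwb]; exact h
      have := len_mul_swap w hwfin hab hwab
      rw [← hv_eq] at this
      omega
  have := len_mul_swap v hv hab hvab
  rw [← heq] at this
  have hM0 : {c : ℕ+ | (a < c ∧ c < b) ∧ v a < v c ∧ v c < v b}.ncard = 0 := by omega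
  have hMf : {c : ℕ+ | (a < c ∧ c < b) ∧ v a < v c ∧ v c < v b}.Finite :=
    (Set.finite_Ioo a b).subset (fun c hc => ⟨hc.1.1, hc.1.2⟩)
  have hMe := (Set.ncard_eq_zero hMf).mp hM0
  refine ⟨a, b, hak, hkb, hab, heval, hvab, ?_⟩
  intro c h1 h2 h3
  have : c ∈ {c : ℕ+ | (a < c ∧ c < b) ∧ v a < v c ∧ v c < v b} := ⟨⟨h1, h2⟩, h3⟩
  rw [hMe] at this
  exact this

lemma cond_up {u v w : Sinf} {k a b : ℕ+} (hak : a ≤ k) (hkb : k < b) (hab : a < b)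
    (heq : ∀ x, w x = v (Equiv.swap a b x)) (hvab : v a < v b)
    (hmid : ∀ c, a < c → c < b → ¬(v a < v c ∧ v c < v b))
    (hI : CondI u k v) (hII : CondII u k v) : CondI u k w ∧ CondII u k w := by
  have hwa : w a = v b := by rw [heq, Equiv.swap_apply_left]
  have hwb : w b = v a := by rw [heq, Equiv.swap_apply_right]
  have hwc : ∀ c : ℕ+, c ≠ a → c ≠ b → w c = v c := by
    intro c h1 h2; rw [heq, swap_eval_of_ne h1 h2]
  constructor
  · intro x
    by_cases hxa : x = a
    · subst hxa
      exact ⟨fun _ => le_of_lt (lt_of_le_of_lt ((hI x).1 hak) (hwa ▸ hvab : v x < w x)),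
        fun hk => absurd hak (not_le.mpr hk)⟩
    · by_cases hxb : x = b
      · subst hxb
        refine ⟨fun hk => absurd hkb (not_lt.mpr hk), fun _ => ?_⟩
        rw [hwb]
        exact le_of_lt (lt_of_lt_of_le hvab ((hI x).2 hkb))
      · rw [hwc x hxa hxb]
        exact hI x
  · intro x y hxy huxy hwinv
    by_cases hxa : x = a
    · subst hxa
      by_cases hyb : y = b
      · subst hyb; exact ⟨hak, hkb⟩
      · have hya : y ≠ x := ne_of_gt hxy
        rw [hwc y hya hyb, hwa] at hwinv
        refine ⟨hak, ?_⟩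
        by_contra hky
        push_neg at hky
        have hyltb : y < b := lt_of_le_of_lt hky hkb
        rcases lt_trichotomy (v y) (v x) with h | h | h
        · exact absurd hky (not_le.mpr (hII x y hxy huxy h).2)
        · exact absurd (v.injective h) hya
        · exact hmid y hxy hyltb ⟨h, hwinv⟩
    · by_cases hxb : x = b
      · subst hxb
        have hya : y ≠ a := ne_of_gt (lt_trans hab hxy)
        have hyb : y ≠ x := ne_of_gt hxy
        rw [hwc y hya hyb, hwb] at hwinv
        exact absurd hkb (not_lt.mpr (hII x y hxy huxy (lt_trans hwinv hvab)).1)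
      · by_cases hya : y = a
        · subst hya
          rw [hwa, hwc x hxa hxb] at hwinv
          exact absurd hak (not_le.mpr (hII x y hxy huxy (lt_trans hvab hwinv)).2)
        · by_cases hyb : y = b
          · subst hyb
            rw [hwb, hwc x hxa hxb] at hwinv
            refine ⟨?_, hkb⟩
            by_contra hkx
            push_neg at hkx
            have hax : a < x := lt_of_le_of_lt hak hkx
            rcases lt_trichotomy (v x) (v y) with h | h | h
            · exact hmid x hax hxy ⟨hwinv, h⟩
            · exact absurd (v.injective h) hxb
            · exact absurd hkx (not_lt.mpr (hII x y hxy huxy h).1)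
          · rw [hwc x hxa hxb, hwc y hya hyb] at hwinv
            exact hII x y hxy huxy hwinv

lemma chain_props {k : ℕ+} {u w : Sinf} (hu : FinSupp u) (h : kBruhat k u w) :
    FinSupp w ∧ len u ≤ len w ∧ CondI u k w ∧ CondII u k w := by
  induction h with
  | refl =>
    refine ⟨hu, le_refl _, fun x => ⟨fun _ => le_refl _, fun _ => le_refl _⟩, ?_⟩
    intro x y hxy h1 h2
    exact absurd h1 (not_lt.mpr (le_of_lt h2))
  | @tail v w hbr hcov ih =>
    obtain ⟨hvfin, hlen, hI, hII⟩ := ih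
    obtain ⟨a, b, hak, hkb, hab, heval, hvab, hmid⟩ := cover_anatomy hvfin hcov
    have hwfin : FinSupp w := by
      obtain ⟨_, a', b', _, _, heq⟩ := hcov
      exact heq ▸ finSupp_mul hvfin (finSupp_swap a' b')
    obtain ⟨hI', hII'⟩ := cond_up hak hkb hab heval hvab hmid hI hII
    refine ⟨hwfin, ?_, hI', hII'⟩
    have := hcov.1
    omega

def NN (ζ : Sinf) (X : Set ℕ+) : Set (ℕ+ × ℕ+) := {p ∈ Inv ζ | p.1 ∈ X ∧ p.2 ∉ X}

def NP (ζ : Sinf) : ℕ := (NN ζ {z | z < ζ z}).ncard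

lemma card_AB {ζ : Sinf} (hζ : FinSupp ζ) {f : ℕ+} (hf : ζ f = f) :
    {x : ℕ+ | x < f ∧ f < ζ x}.ncard = {y : ℕ+ | f < y ∧ ζ y < f}.ncard := by
  set A : Set ℕ+ := {x | x < f ∧ f < ζ x} with hA
  set B : Set ℕ+ := {y | f < y ∧ ζ y < f} with hB
  set A' : Set ℕ+ := {x | x < f ∧ ζ x < f} with hA'
  have hIiof : (Set.Iio f).Finite := Set.finite_Iio f
  have hAf : A.Finite := hIiof.subset (fun x hx => hx.1)
  have hA'f : A'.Finite := hIiof.subset (fun x hx => hx.1)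
  have hBf : B.Finite := hζ.subset (fun y hy => by
    simp only [Set.mem_setOf_eq]
    exact fun h => absurd (h ▸ hy.2) (not_lt.mpr (le_of_lt hy.1)))
  have hsplit1 : Set.Iio f = A' ∪ A := by
    ext x
    simp only [Set.mem_Iio, hA, hA', Set.mem_union, Set.mem_setOf_eq]
    constructor
    · intro hx
      rcases lt_trichotomy (ζ x) f with h | h | h
      · exact Or.inl ⟨hx, h⟩
      · exact absurd (ζ.injective (h.trans hf.symm)) (ne_of_lt hx)
      · exact Or.inr ⟨hx, h⟩
    · rintro (⟨h, _⟩ | ⟨h, _⟩) <;> exact h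
  have hsplit2 : {y : ℕ+ | ζ y < f} = A' ∪ B := by
    ext y
    simp only [hB, hA', Set.mem_union, Set.mem_setOf_eq]
    constructor
    · intro hy
      rcases lt_trichotomy y f with h | h | h
      · exact Or.inl ⟨h, hy⟩
      · exact absurd (h ▸ hy) (by rw [hf]; exact lt_irrefl f)
      · exact Or.inr ⟨h, hy⟩
    · rintro (⟨_, h⟩ | ⟨_, h⟩) <;> exact h
  have himg : {y : ℕ+ | ζ y < f} = ⇑ζ.symm '' Set.Iio f := by
    ext y
    simp only [Set.mem_setOf_eq, Set.mem_image, Set.mem_Iio]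
    constructor
    · intro hy; exact ⟨ζ y, hy, ζ.symm_apply_apply y⟩
    · rintro ⟨z, hz, rfl⟩; rwa [ζ.apply_symm_apply]
  have hcard : (Set.Iio f).ncard = {y : ℕ+ | ζ y < f}.ncard := by
    rw [himg, Set.ncard_image_of_injective _ ζ.symm.injective]
  have hd1 : Disjoint A' A := by
    rw [Set.disjoint_left]
    rintro x ⟨_, h1⟩ ⟨_, h2⟩
    exact absurd (lt_trans h1 h2) (lt_irrefl _)
  have hd2 : Disjoint A' B := by
    rw [Set.disjoint_left]
    rintro x ⟨h1, _⟩ ⟨h2, _⟩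
    exact absurd (lt_trans h1 h2) (lt_irrefl _)
  have e1 : (Set.Iio f).ncard = A'.ncard + A.ncard := by
    rw [hsplit1, Set.ncard_union_eq hd1 hA'f hAf]
  have e2 : {y : ℕ+ | ζ y < f}.ncard = A'.ncard + B.ncard := by
    rw [hsplit2, Set.ncard_union_eq hd2 hA'f hBf]
  omega

lemma toggle_step {ζ : Sinf} (hζ : FinSupp ζ) {W : Set ℕ+} {f : ℕ+} (hf : ζ f = f)
    (hfW : f ∉ W) (hup : {z : ℕ+ | z < ζ z} ⊆ W) (hdw : ∀ z ∈ W, ¬ ζ z < z) :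
    (NN ζ (insert f W)).ncard = (NN ζ W).ncard := by
  have hIf : (Inv ζ).Finite := inv_finite hζ
  set Af : Set (ℕ+ × ℕ+) := {p ∈ Inv ζ | p.2 = f} with hAf
  set Bf : Set (ℕ+ × ℕ+) := {p ∈ Inv ζ | p.1 = f} with hBf
  set C : Set (ℕ+ × ℕ+) := {p ∈ Inv ζ | p.1 ≠ f ∧ p.2 ≠ f ∧ p.1 ∈ W ∧ p.2 ∉ W} with hC
  have hNW : NN ζ W = C ∪ Af := by
    ext ⟨x, y⟩
    simp only [NN, hC, hAf, Set.mem_union, Set.mem_setOf_eq, Set.mem_sep_iff]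
    constructor
    · rintro ⟨hp, h1, h2⟩
      by_cases hy : y = f
      · exact Or.inr ⟨hp, hy⟩
      · exact Or.inl ⟨hp, fun h => hfW (h ▸ h1), hy, h1, h2⟩
    · rintro (⟨hp, _, _, h1, h2⟩ | ⟨hp, hy⟩)
      · exact ⟨hp, h1, h2⟩
      · obtain ⟨hxy, hinv⟩ := hp
        have hfx : f < ζ x := by rw [← hf, ← hy]; exact hinv
        have hxf : x < f := by rw [← hy]; exact hxy
        exact ⟨⟨hxy, hinv⟩, hup (show x ∈ {z : ℕ+ | z < ζ z} from lt_trans hxf hfx),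
          by rw [hy]; exact hfW⟩
  have hNiW : NN ζ (insert f W) = C ∪ Bf := by
    ext ⟨x, y⟩
    simp only [NN, hC, hBf, Set.mem_union, Set.mem_setOf_eq, Set.mem_sep_iff,
      Set.mem_insert_iff]
    constructor
    · rintro ⟨hp, h1, h2⟩
      push_neg at h2
      rcases h1 with h1 | h1
      · exact Or.inr ⟨hp, h1⟩
      · exact Or.inl ⟨hp, fun h => hfW (h ▸ h1), h2.1, h1, h2.2⟩
    · rintro (⟨hp, hx, hy, h1, h2⟩ | ⟨hp, hx⟩)
      · refine ⟨hp, Or.inr h1, ?_⟩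
        push_neg
        exact ⟨hy, h2⟩
      · obtain ⟨hxy, hinv⟩ := hp
        have h1 : ζ y < f := by rw [← hf, ← hx]; exact hinv
        have hfy : f < y := by rw [← hx]; exact hxy
        have hzy : ζ y < y := lt_trans h1 hfy
        refine ⟨⟨hxy, hinv⟩, Or.inl hx, ?_⟩
        push_neg
        exact ⟨fun h => absurd (h ▸ hfy) (lt_irrefl f), fun hyW => hdw y hyW hzy⟩
  have hdCA : Disjoint C Af := by
    rw [Set.disjoint_left]
    rintro p ⟨_, _, h2, _⟩ ⟨_, h4⟩
    exact h2 h4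
  have hdCB : Disjoint C Bf := by
    rw [Set.disjoint_left]
    rintro p ⟨_, h1, _⟩ ⟨_, h4⟩
    exact h1 h4
  have hCf : C.Finite := hIf.subset (fun p hp => hp.1)
  have hAff : Af.Finite := hIf.subset (fun p hp => hp.1)
  have hBff : Bf.Finite := hIf.subset (fun p hp => hp.1)
  have hAeq : Af = (fun x => (x, f)) '' {x : ℕ+ | x < f ∧ f < ζ x} := by
    ext ⟨x, y⟩
    simp only [hAf, Set.mem_setOf_eq, Set.mem_image, Set.mem_sep_iff]
    constructor
    · rintro ⟨⟨hxy, hinv⟩, rfl⟩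
      exact ⟨x, ⟨hxy, by rwa [hf] at hinv⟩, rfl⟩
    · rintro ⟨z, ⟨h1, h2⟩, heq⟩
      have hx : z = x := congrArg Prod.fst heq
      have hyf : f = y := congrArg Prod.snd heq
      subst hx; subst hyf
      exact ⟨⟨h1, by rw [hf]; exact h2⟩, rfl⟩
  have hBeq : Bf = (fun y => ((f : ℕ+), y)) '' {y : ℕ+ | f < y ∧ ζ y < f} := by
    ext ⟨x, y⟩
    simp only [hBf, Set.mem_setOf_eq, Set.mem_image, Set.mem_sep_iff]
    constructor
    · rintro ⟨⟨hxy, hinv⟩, rfl⟩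
      exact ⟨y, ⟨hxy, by rwa [hf] at hinv⟩, rfl⟩
    · rintro ⟨z, ⟨h1, h2⟩, heq⟩
      have hxf : f = x := congrArg Prod.fst heq
      have hzy : z = y := congrArg Prod.snd heq
      subst hxf; subst hzy
      exact ⟨⟨h1, by rw [hf]; exact h2⟩, rfl⟩
  have hinj1 : Function.Injective (fun x : ℕ+ => (x, f)) := fun c d h => congrArg Prod.fst h
  have hinj2 : Function.Injective (fun y : ℕ+ => ((f : ℕ+), y)) := fun c d h => congrArg Prod.snd h
  have hcAf : Af.ncard = {x : ℕ+ | x < f ∧ f < ζ x}.ncard := by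
    rw [hAeq, Set.ncard_image_of_injective _ hinj1]
  have hcBf : Bf.ncard = {y : ℕ+ | f < y ∧ ζ y < f}.ncard := by
    rw [hBeq, Set.ncard_image_of_injective _ hinj2]
  rw [hNW, hNiW, Set.ncard_union_eq hdCA hCf hAff, Set.ncard_union_eq hdCB hCf hBff,
    hcAf, hcBf, card_AB hζ hf]

lemma Ncal_eq {ζ : Sinf} (hζ : FinSupp ζ) {U : Set ℕ+} (hUf : U.Finite)
    (hup : {z : ℕ+ | z < ζ z} ⊆ U) (hdw : ∀ z ∈ U, ¬ ζ z < z) :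
    (NN ζ U).ncard = NP ζ := by
  set U0 : Set ℕ+ := {z : ℕ+ | z < ζ z} with hU0
  have hVf : (U \ U0).Finite := hUf.diff
  have hkey : ∀ V : Set ℕ+, V.Finite → ((∀ z ∈ V, ζ z = z) → (NN ζ (U0 ∪ V)).ncard = NP ζ) := by
    intro V hVfin
    refine Set.Finite.induction_on
      (motive := fun V _ => (∀ z ∈ V, ζ z = z) → (NN ζ (U0 ∪ V)).ncard = NP ζ) V hVfin ?_ ?_
    · intro _; rw [Set.union_empty]; rfl
    · intro a s ha hs ih hfix
      have hfa : ζ a = a := hfix a (Set.mem_insert a s)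
      have hnm : a ∉ U0 ∪ s := by
        rintro (h | h)
        · have : a < ζ a := h
          rw [hfa] at this
          exact absurd this (lt_irrefl a)
        · exact ha h
      have hsub : U0 ⊆ U0 ∪ s := Set.subset_union_left
      have hdw' : ∀ z ∈ U0 ∪ s, ¬ ζ z < z := by
        rintro z (hz | hz)
        · exact fun hlt => absurd (lt_trans hz hlt) (lt_irrefl _)
        · intro hlt
          rw [hfix z (Set.mem_insert_of_mem a hz)] at hlt
          exact absurd hlt (lt_irrefl z)
      have hrw : U0 ∪ insert a s = insert a (U0 ∪ s) := Set.union_insert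
      rw [hrw, toggle_step hζ hfa hnm hsub hdw']
      exact ih (fun z hz => hfix z (Set.mem_insert_of_mem a hz))
  have hfix : ∀ z ∈ U \ U0, ζ z = z := by
    rintro z ⟨hz1, hz2⟩
    have h1 := hdw z hz1
    simp only [hU0, Set.mem_setOf_eq] at hz2
    exact le_antisymm (not_lt.mp hz2) (not_lt.mp h1)
  have := hkey (U \ U0) hVf hfix
  rwa [Set.union_diff_cancel hup] at this

lemma count_master {u w ζ : Sinf} {k : ℕ+} (hu : FinSupp u) (hz : FinSupp ζ)
    (hcomp : ∀ x, ζ (u x) = w x) (hI : CondI u k w) (hII : CondII u k w) :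
    len w + ((Inv ζ).ncard - NP ζ) = len u + NP ζ ∧ NP ζ ≤ (Inv ζ).ncard := by
  classical
  set U : Set ℕ+ := ⇑u '' Set.Iic k with hU
  have hUfin : U.Finite := (Set.finite_Iic k).image _
  have hmemU : ∀ z : ℕ+, z ∈ U ↔ u.symm z ≤ k := by
    intro z
    constructor
    · rintro ⟨i, hi, rfl⟩; rwa [Equiv.symm_apply_apply]
    · intro h; exact ⟨u.symm z, h, u.apply_symm_apply z⟩
  have hupU : {z : ℕ+ | z < ζ z} ⊆ U := by
    intro z hz
    rw [hmemU]
    by_contra h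
    push_neg at h
    have h2 := (hI (u.symm z)).2 h
    rw [← hcomp (u.symm z), u.apply_symm_apply] at h2
    exact absurd (lt_of_lt_of_le hz h2) (lt_irrefl z)
  have hdwU : ∀ z ∈ U, ¬ ζ z < z := by
    rintro z ⟨i, hi, rfl⟩ hlt
    have h2 := (hI i).1 hi
    rw [← hcomp i] at h2
    exact absurd (lt_of_le_of_lt h2 hlt) (lt_irrefl _)
  have hIz : (Inv ζ).Finite := inv_finite hz
  set DP : Set (ℕ+ × ℕ+) := {p ∈ Inv ζ | u.symm p.1 < u.symm p.2} with hDPdef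
  set DM : Set (ℕ+ × ℕ+) := {p ∈ Inv ζ | u.symm p.2 < u.symm p.1} with hDMdef
  set S2 : Set (ℕ+ × ℕ+) := {q | q.1 < q.2 ∧ u.symm q.2 < u.symm q.1 ∧ ζ q.1 < ζ q.2} with hS2def
  have hDPfin : DP.Finite := hIz.subset (fun p hp => hp.1)
  have hDMfin : DM.Finite := hIz.subset (fun p hp => hp.1)
  have hDPeq : DP = NN ζ U := by
    ext ⟨x, y⟩
    simp only [hDPdef, NN, Set.mem_sep_iff, hmemU]
    constructor
    · rintro ⟨⟨hxy, hinv⟩, hlt⟩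
      have hu1 : u (u.symm x) < u (u.symm y) := by
        rw [u.apply_symm_apply, u.apply_symm_apply]; exact hxy
      have hw1 : w (u.symm y) < w (u.symm x) := by
        rw [← hcomp, ← hcomp, u.apply_symm_apply, u.apply_symm_apply]; exact hinv
      obtain ⟨h1, h2⟩ := hII (u.symm x) (u.symm y) hlt hu1 hw1
      exact ⟨⟨hxy, hinv⟩, h1, not_le.mpr h2⟩
    · rintro ⟨hp, h1, h2⟩
      exact ⟨hp, lt_of_le_of_lt h1 (not_le.mp h2)⟩
  have hDPcard : DP.ncard = NP ζ := by
    rw [hDPeq]; exact Ncal_eq hz hUfin hupU hdwU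
  have hpm_inj : Function.Injective (Prod.map ⇑u ⇑u) := by
    intro p q h
    have h1 : u p.1 = u q.1 := congrArg Prod.fst h
    have h2 : u p.2 = u q.2 := congrArg Prod.snd h
    exact Prod.ext (u.injective h1) (u.injective h2)
  have hswap_inj : Function.Injective (Prod.swap : ℕ+ × ℕ+ → ℕ+ × ℕ+) :=
    Prod.swap_injective
  -- image of Inv w
  have hJw : Prod.map ⇑u ⇑u '' Inv w = {q : ℕ+ × ℕ+ | u.symm q.1 < u.symm q.2 ∧ ζ q.2 < ζ q.1} := by
    ext ⟨x, y⟩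
    constructor
    · rintro ⟨⟨c, d⟩, ⟨hcd, hinv⟩, heq⟩
      have hx : u c = x := congrArg Prod.fst heq
      have hy : u d = y := congrArg Prod.snd heq
      constructor
      · rw [← hx, ← hy, Equiv.symm_apply_apply, Equiv.symm_apply_apply]; exact hcd
      · rw [← hx, ← hy, hcomp c, hcomp d]; exact hinv
    · rintro ⟨h1, h2⟩
      refine ⟨(u.symm x, u.symm y), ⟨h1, ?_⟩, ?_⟩
      · show w (u.symm y) < w (u.symm x)
        rw [← hcomp, ← hcomp, u.apply_symm_apply, u.apply_symm_apply]; exact h2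
      · show (u (u.symm x), u (u.symm y)) = (x, y)
        rw [u.apply_symm_apply, u.apply_symm_apply]
  have hJsplit : {q : ℕ+ × ℕ+ | u.symm q.1 < u.symm q.2 ∧ ζ q.2 < ζ q.1} =
      DP ∪ Prod.swap '' S2 := by
    ext ⟨x, y⟩
    constructor
    · rintro ⟨h1, h2⟩
      rcases lt_trichotomy x y with h | h | h
      · exact Or.inl ⟨⟨h, h2⟩, h1⟩
      · exfalso; rw [h] at h2; exact absurd h2 (lt_irrefl _)
      · exact Or.inr ⟨(y, x), ⟨h, h1, h2⟩, rfl⟩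
    · rintro (⟨⟨hxy, hinv⟩, hlt⟩ | ⟨⟨c, d⟩, ⟨h1, h2, h3⟩, heq⟩)
      · exact ⟨hlt, hinv⟩
      · have hx : d = x := congrArg Prod.fst heq
        have hy : c = y := congrArg Prod.snd heq
        subst hx; subst hy
        exact ⟨h2, h3⟩
  have hdisj1 : Disjoint DP (Prod.swap '' S2) := by
    rw [Set.disjoint_left]
    rintro p ⟨⟨hxy, _⟩, _⟩ ⟨⟨c, d⟩, ⟨h1, _, _⟩, heq⟩
    rw [← heq] at hxy
    exact absurd (lt_trans h1 hxy) (lt_irrefl _)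
  -- image of Inv u, giving S2 and DM
  have hJu : Prod.swap '' (Prod.map ⇑u ⇑u '' Inv u) =
      {q : ℕ+ × ℕ+ | q.1 < q.2 ∧ u.symm q.2 < u.symm q.1} := by
    ext ⟨x, y⟩
    constructor
    · rintro ⟨⟨x', y'⟩, ⟨⟨c, d⟩, ⟨hcd, hinv⟩, heq⟩, heq2⟩
      have e1 : u c = x' := congrArg Prod.fst heq
      have e2 : u d = y' := congrArg Prod.snd heq
      have e3 : y' = x := congrArg Prod.fst heq2
      have e4 : x' = y := congrArg Prod.snd heq2
      constructor
      · rw [← e3, ← e4, ← e1, ← e2]; exact hinv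
      · rw [← e3, ← e4, ← e1, ← e2, Equiv.symm_apply_apply, Equiv.symm_apply_apply]
        exact hcd
    · rintro ⟨h1, h2⟩
      refine ⟨(y, x), ⟨(u.symm y, u.symm x), ⟨h2, ?_⟩, ?_⟩, rfl⟩
      · show u (u.symm x) < u (u.symm y)
        rw [u.apply_symm_apply, u.apply_symm_apply]; exact h1
      · show (u (u.symm y), u (u.symm x)) = (y, x)
        rw [u.apply_symm_apply, u.apply_symm_apply]
  have hKsplit : {q : ℕ+ × ℕ+ | q.1 < q.2 ∧ u.symm q.2 < u.symm q.1} = DM ∪ S2 := by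
    ext ⟨x, y⟩
    constructor
    · rintro ⟨h1, h2⟩
      rcases lt_trichotomy (ζ x) (ζ y) with h | h | h
      · exact Or.inr ⟨h1, h2, h⟩
      · exact absurd (ζ.injective h) (ne_of_lt h1)
      · exact Or.inl ⟨⟨h1, h⟩, h2⟩
    · rintro (⟨⟨h1, h2⟩, h3⟩ | ⟨h1, h2, h3⟩)
      · exact ⟨h1, h3⟩
      · exact ⟨h1, h2⟩
  have hdisj2 : Disjoint DM S2 := by
    rw [Set.disjoint_left]
    rintro p ⟨⟨_, h1⟩, _⟩ ⟨_, _, h2⟩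
    exact absurd (lt_trans h1 h2) (lt_irrefl _)
  have hKfin : {q : ℕ+ × ℕ+ | q.1 < q.2 ∧ u.symm q.2 < u.symm q.1}.Finite := by
    rw [← hJu]
    exact ((inv_finite hu).image _).image _
  have hS2fin : S2.Finite := by
    apply hKfin.subset
    rw [hKsplit]
    exact Set.subset_union_right
  -- length identities
  have hlenw : len w = DP.ncard + S2.ncard := by
    have e1 : len w = (Prod.map ⇑u ⇑u '' Inv w).ncard :=
      (Set.ncard_image_of_injective _ hpm_inj).symm
    rw [e1, hJw, hJsplit, Set.ncard_union_eq hdisj1 hDPfin (hS2fin.image _),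
      Set.ncard_image_of_injective _ hswap_inj]
  have hlenu : len u = DM.ncard + S2.ncard := by
    have e1 : len u = (Prod.map ⇑u ⇑u '' Inv u).ncard :=
      (Set.ncard_image_of_injective _ hpm_inj).symm
    have e2 : (Prod.map ⇑u ⇑u '' Inv u).ncard =
        (Prod.swap '' (Prod.map ⇑u ⇑u '' Inv u)).ncard :=
      (Set.ncard_image_of_injective _ hswap_inj).symm
    rw [e1, e2, hJu, hKsplit, Set.ncard_union_eq hdisj2 hDMfin hS2fin]
  have hZsplit : Inv ζ = DP ∪ DM := by
    ext ⟨x, y⟩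
    constructor
    · intro hp
      rcases lt_trichotomy (u.symm x) (u.symm y) with h | h | h
      · exact Or.inl ⟨hp, h⟩
      · exact absurd (u.symm.injective h) (ne_of_lt hp.1)
      · exact Or.inr ⟨hp, h⟩
    · rintro (⟨hp, _⟩ | ⟨hp, _⟩) <;> exact hp
  have hdisj3 : Disjoint DP DM := by
    rw [Set.disjoint_left]
    rintro p ⟨_, h1⟩ ⟨_, h2⟩
    exact absurd (lt_trans h1 h2) (lt_irrefl _)
  have hZcard : (Inv ζ).ncard = DP.ncard + DM.ncard := by
    rw [hZsplit, Set.ncard_union_eq hdisj3 hDPfin hDMfin]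
  omega

lemma preimage_eq_image_symm (w : Sinf) (S : Set ℕ+) : ⇑w ⁻¹' S = ⇑w.symm '' S := by
  ext z
  simp only [Set.mem_preimage, Set.mem_image]
  constructor
  · intro h; exact ⟨w z, h, w.symm_apply_apply z⟩
  · rintro ⟨s, hs, rfl⟩; rwa [w.apply_symm_apply]

lemma ne_exists_E {u w : Sinf} {k : ℕ+} (hu : FinSupp u) (hw : FinSupp w)
    (hI : CondI u k w) (hne : w ≠ u) : ∃ a : ℕ+, a ≤ k ∧ u a < w a := by
  by_contra hcon
  push_neg at hcon
  have heqk : ∀ a : ℕ+, a ≤ k → u a = w a := fun a ha =>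
    le_antisymm ((hI a).1 ha) (hcon a ha)
  set S : Set ℕ+ := {d | u d ≠ w d} with hS
  have hSfin : S.Finite := by
    apply (hu.union hw).subset
    intro d hd
    by_cases h1 : u d = d
    · right
      simp only [Set.mem_setOf_eq]
      intro h2
      exact hd (h1.trans h2.symm)
    · left; exact h1
  have hSne : S.Nonempty := by
    by_contra h
    rw [Set.not_nonempty_iff_eq_empty] at h
    apply hne
    apply Equiv.ext
    intro x
    by_contra h2
    have : x ∈ S := fun h3 => h2 h3.symm
    rw [h] at this
    exact this
  obtain ⟨d, hdS, hdmax⟩ := Set.exists_max_image S u hSfin hSne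
  set e := w.symm (u d) with he
  have hwe : w e = u d := w.apply_symm_apply (u d)
  have hed : e ≠ d := by
    intro h
    rw [h] at hwe
    exact hdS hwe.symm
  have heS : e ∈ S := by
    intro h
    rw [hwe] at h
    exact hed (u.injective h)
  have hek : k < e := by
    by_contra h
    push_neg at h
    exact heS (heqk e h)
  have h1 : w e ≤ u e := (hI e).2 hek
  rw [hwe] at h1
  have h2 : u d ≠ u e := fun h => hed (u.injective h).symm
  exact absurd (hdmax e heS) (not_le.mpr (lt_of_le_of_ne h1 h2))

lemma cond_to_chain {u : Sinf} {k : ℕ+} (hu : FinSupp u) :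
    ∀ n : ℕ, ∀ w : Sinf, len w = n → FinSupp w → CondI u k w → CondII u k w →
      kBruhat k u w := by
  intro n
  induction n using Nat.strong_induction_on with
  | _ n ih =>
    intro w hlen hw hI hII
    by_cases hne : w = u
    · rw [hne]
      exact Relation.ReflTransGen.refl
    set E : Set ℕ+ := {a | a ≤ k ∧ u a < w a} with hE
    have hEfin : E.Finite := (Set.finite_Iic k).subset (fun a ha => ha.1)
    have hEne : E.Nonempty := by
      obtain ⟨a, h1, h2⟩ := ne_exists_E hu hw hI hne
      exact ⟨a, h1, h2⟩
    obtain ⟨a, haE, hamin⟩ := Set.exists_min_image E w hEfin hEne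
    set B : Set ℕ+ := {b | w b < w a ∧ w a ≤ u b} with hB
    have hBfin : B.Finite := by
      apply Set.Finite.subset (((Set.finite_Iio (w a)).image ⇑w.symm))
      intro b hb
      rw [← preimage_eq_image_symm]
      exact hb.1
    have hBne : B.Nonempty := by
      by_contra hcon
      rw [Set.not_nonempty_iff_eq_empty] at hcon
      have hsub : ⇑w ⁻¹' Set.Iio (w a) ⊆ ⇑u ⁻¹' Set.Iio (w a) := by
        intro b hb
        simp only [Set.mem_preimage, Set.mem_Iio] at hb ⊢
        by_contra h2
        push_neg at h2
        have : b ∈ B := ⟨hb, h2⟩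
        rw [hcon] at this
        exact this
      have hP1fin : (⇑u ⁻¹' Set.Iio (w a)).Finite := by
        rw [preimage_eq_image_symm]
        exact (Set.finite_Iio (w a)).image _
      have hcards : (⇑u ⁻¹' Set.Iio (w a)).ncard ≤ (⇑w ⁻¹' Set.Iio (w a)).ncard := by
        rw [preimage_eq_image_symm, preimage_eq_image_symm,
          Set.ncard_image_of_injective _ u.symm.injective,
          Set.ncard_image_of_injective _ w.symm.injective]
      have heq := Set.eq_of_subset_of_ncard_le hsub hcards hP1fin
      have ha1 : a ∈ ⇑u ⁻¹' Set.Iio (w a) := haE.2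
      rw [← heq] at ha1
      exact absurd (Set.mem_preimage.mp ha1) (lt_irrefl (w a))
    obtain ⟨b, hbB, hbmax⟩ := Set.exists_max_image B w hBfin hBne
    have hbk : k < b := by
      by_contra h
      push_neg at h
      have := (hI b).1 h
      exact absurd (lt_of_le_of_lt hbB.2 (lt_of_le_of_lt this hbB.1)) (lt_irrefl _)
    have hab : a < b := lt_of_le_of_lt haE.1 hbk
    -- claim: u a ≤ w b
    have hua_le : u a ≤ w b := by
      by_contra hcon
      push_neg at hcon
      have asc : ∀ m : ℕ, ∀ v : ℕ+, ((w a : ℕ) - (v : ℕ)) ≤ m → w b < v → v < w a →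
          u.symm v ≠ w.symm v → False := by
        intro m
        induction m with
        | zero =>
          intro v hm h1 h2 hnev
          have := (PNat.coe_lt_coe v (w a)).mpr h2
          omega
        | succ m ihm =>
          intro v hm h1 h2 hnev
          set d := w.symm v with hd
          have hwd : w d = v := w.apply_symm_apply v
          by_cases hdk : d ≤ k
          · have h3 := (hI d).1 hdk
            rcases lt_or_eq_of_le h3 with h4 | h4
            · have : d ∈ E := ⟨hdk, h4⟩
              have := hamin d this
              rw [hwd] at this
              exact absurd h2 (not_lt.mpr this)
            · apply hnev
              have h5 : u d = v := h4.trans hwd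
              have h6 : u.symm v = d := by rw [← h5, Equiv.symm_apply_apply]
              rw [h6, hd]
          · push_neg at hdk
            have h3 : v ≤ u d := hwd ▸ (hI d).2 hdk
            rcases lt_or_eq_of_le h3 with h4 | h4
            · by_cases h5 : w a ≤ u d
              · have : d ∈ B := ⟨by rwa [hwd], h5⟩
                have := hbmax d this
                rw [hwd] at this
                exact absurd h1 (not_lt.mpr this)
              · push_neg at h5
                apply ihm (u d) ?_ (lt_trans h1 h4) h5 ?_
                · have c1 := (PNat.coe_lt_coe v (u d)).mpr h4
                  omega
                · rw [Equiv.symm_apply_apply]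
                  intro hcon2
                  have : w d = u d := by
                    conv_lhs => rw [hcon2]
                    exact w.apply_symm_apply (u d)
                  rw [hwd] at this
                  exact absurd h4 (by rw [this]; exact lt_irrefl _)
            · apply hnev
              have h6 : u.symm v = d := by rw [h4, Equiv.symm_apply_apply]
              rw [h6, hd]
      apply asc (w a : ℕ) (u a) (by omega) hcon haE.2
      rw [Equiv.symm_apply_apply]
      intro hcon2
      have : w a = u a := by
        conv_lhs => rw [hcon2]
        exact w.apply_symm_apply (u a)
      exact absurd haE.2 (by rw [this]; exact lt_irrefl _)
    -- claim: no intermediate values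
    have hmid : ∀ c : ℕ+, a < c → c < b → ¬(w b < w c ∧ w c < w a) := by
      rintro c hac hcb ⟨h1, h2⟩
      by_cases hck : c ≤ k
      · have h3 := (hI c).1 hck
        rcases lt_or_eq_of_le h3 with h4 | h4
        · exact absurd h2 (not_lt.mpr (hamin c ⟨hck, h4⟩))
        · rcases lt_trichotomy (u a) (u c) with h5 | h5 | h5
          · exact absurd hck (not_le.mpr (hII a c hac h5 h2).2)
          · exact absurd (u.injective h5) (ne_of_lt hac)
          · have : u c ≤ w b := le_of_lt (lt_of_lt_of_le h5 hua_le)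
            rw [← h4] at h1
            exact absurd this (not_le.mpr h1)
      · push_neg at hck
        have h3 := (hI c).2 hck
        by_cases h5 : w a ≤ u c
        · exact absurd h1 (not_lt.mpr (hbmax c ⟨h2, h5⟩))
        · push_neg at h5
          have h6 : u c < u b := lt_of_lt_of_le h5 hbB.2
          exact absurd (hII c b hcb h6 h1).1 (not_le.mpr hck)
    -- the new permutation
    set w' := w * Equiv.swap a b with hw'
    have hw'eval : ∀ x, w' x = w (Equiv.swap a b x) := fun x => rfl
    have hw'a : w' a = w b := by rw [hw'eval, Equiv.swap_apply_left]
    have hw'b : w' b = w a := by rw [hw'eval, Equiv.swap_apply_right]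
    have hw'c : ∀ c : ℕ+, c ≠ a → c ≠ b → w' c = w c := by
      intro c hc1 hc2; rw [hw'eval, swap_eval_of_ne hc1 hc2]
    have hw'fin : FinSupp w' := finSupp_mul hw (finSupp_swap a b)
    have hw'ab : w' a < w' b := by rw [hw'a, hw'b]; exact hbB.1
    have hcancel : w' * Equiv.swap a b = w := by
      rw [hw', mul_assoc, Equiv.swap_mul_self, mul_one]
    have hMempty : {c : ℕ+ | (a < c ∧ c < b) ∧ w' a < w' c ∧ w' c < w' b} = ∅ := by
      ext c
      simp only [Set.mem_setOf_eq, Set.mem_empty_iff_false, iff_false]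
      rintro ⟨⟨hc1, hc2⟩, hc3, hc4⟩
      rw [hw'c c (ne_of_gt hc1) (ne_of_lt hc2), hw'a] at hc3
      rw [hw'c c (ne_of_gt hc1) (ne_of_lt hc2), hw'b] at hc4
      exact hmid c hc1 hc2 ⟨hc3, hc4⟩
    have hlen' : len w = len w' + 1 := by
      have := len_mul_swap w' hw'fin hab hw'ab
      rw [hcancel, hMempty] at this
      simp only [Set.ncard_empty] at this
      omega
    have hcov : kCover k w' w := ⟨hlen', a, b, haE.1, hbk, hcancel.symm⟩
    -- conditions for w'
    have hI' : CondI u k w' := by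
      intro x
      by_cases hxa : x = a
      · subst hxa
        exact ⟨fun _ => hw'a ▸ hua_le, fun h => absurd haE.1 (not_le.mpr h)⟩
      · by_cases hxb : x = b
        · subst hxb
          exact ⟨fun h => absurd hbk (not_lt.mpr h), fun _ => hw'b ▸ hbB.2⟩
        · rw [hw'c x hxa hxb]
          exact hI x
    have hII' : CondII u k w' := by
      intro x y hxy huxy hwinv
      by_cases hxa : x = a
      · subst hxa
        by_cases hyb : y = b
        · subst hyb
          exact ⟨haE.1, hbk⟩
        · have hya : y ≠ x := ne_of_gt hxy
          rw [hw'c y hya hyb, hw'a] at hwinv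
          exact ⟨haE.1, (hII x y hxy huxy (lt_trans hwinv hbB.1)).2⟩
      · by_cases hyb : y = b
        · subst hyb
          by_cases hxb : x = y
          · exact absurd hxb (ne_of_lt hxy)
          · rw [hw'c x hxa hxb, hw'b] at hwinv
            exact ⟨(hII x y hxy huxy (lt_trans hbB.1 hwinv)).1, hbk⟩
        · by_cases hya : y = a
          · rw [hya] at hxy huxy hwinv
            rw [hw'a, hw'c x hxa (ne_of_lt (lt_trans hxy hab))] at hwinv
            exfalso
            rcases lt_trichotomy (w x) (w a) with h5 | h5 | h5
            · -- w b < w x < w a, x < a ≤ k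
              have hxk : x ≤ k := le_of_lt (lt_of_lt_of_le hxy haE.1)
              have h6 := (hI x).1 hxk
              rcases lt_or_eq_of_le h6 with h7 | h7
              · exact absurd h5 (not_lt.mpr (hamin x ⟨hxk, h7⟩))
              · have : u x < u x := by
                  calc u x < u a := huxy
                  _ ≤ w b := hua_le
                  _ < w x := hwinv
                  _ = u x := h7.symm
                exact absurd this (lt_irrefl _)
            · exact absurd (w.injective h5) (ne_of_lt hxy)
            · exact absurd haE.1 (not_le.mpr (hII x a hxy huxy h5).2)
          · by_cases hxb : x = b
            · subst hxb
              rw [hw'b] at hwinv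
              rw [hw'c y hya hyb] at hwinv
              exfalso
              -- y > x = b, w y < w a ≤ u y?  u x < u y with u x = u b ≥ w a
              have h6 : w a ≤ u y := le_of_lt (lt_of_le_of_lt hbB.2 huxy)
              have hyB : y ∈ B := ⟨hwinv, h6⟩
              have h7 := hbmax y hyB
              have h8 : w y < w x := lt_of_le_of_ne h7 (fun h => hyb (w.injective h))
              exact absurd (hII x y hxy huxy h8).1 (not_le.mpr hbk)
            · rw [hw'c x hxa hxb, hw'c y hya hyb] at hwinv
              exact hII x y hxy huxy hwinv
    have hstep : kBruhat k u w' := by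
      apply ih (len w') ?_ w' rfl hw'fin hI' hII'
      omega
    exact Relation.ReflTransGen.tail hstep hcov

lemma perm_le_id_eq_one {ζ : Sinf} (hζ : FinSupp ζ) (h : ∀ x : ℕ+, ζ x ≤ x) : ζ = 1 := by
  by_contra hne
  have hSne : {x : ℕ+ | ζ x ≠ x}.Nonempty := by
    by_contra hc
    rw [Set.not_nonempty_iff_eq_empty] at hc
    apply hne
    apply Equiv.ext
    intro x
    by_contra h2
    have : x ∈ {x : ℕ+ | ζ x ≠ x} := h2
    rw [hc] at this
    exact this
  obtain ⟨m, hmS, hmin⟩ := Set.exists_min_image _ id hζ hSne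
  have h1 : ζ m < m := lt_of_le_of_ne (h m) hmS
  have h2 : ζ m ∈ {x : ℕ+ | ζ x ≠ x} := by
    intro hcon
    exact hmS (ζ.injective hcon)
  exact absurd (hmin _ h2) (not_le.mpr h1)

lemma exists_good_u {ζ : Sinf} (hζ : FinSupp ζ) (hne : ζ ≠ 1) :
    ∃ (u : Sinf) (k : ℕ+), FinSupp u ∧ CondI u k (ζ * u) ∧ CondII u k (ζ * u) := by
  classical
  obtain ⟨N, hN⟩ := exists_bound hζ
  have hcl : ∀ x : ℕ+, x ≤ N → ζ x ≤ N := fun x hx => bound_closed hN hx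
  set A : Finset ℕ+ := hζ.toFinset.filter (fun x => x < ζ x) with hA
  have hmemA : ∀ x : ℕ+, x ∈ A ↔ x < ζ x := by
    intro x
    simp only [hA, Finset.mem_filter, Set.Finite.mem_toFinset, Set.mem_setOf_eq,
      and_iff_right_iff_imp]
    exact fun h => (Set.Finite.mem_toFinset (s := {i : ℕ+ | ζ i ≠ i}) (hs := hζ)).mpr (ne_of_gt h)
  have hAsub : ∀ x : ℕ+, x ∈ A → x ≤ N := by
    intro x hx
    rw [hmemA] at hx
    by_contra h
    push_neg at h
    rw [hN x h] at hx
    exact absurd hx (lt_irrefl x)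
  set k0 : ℕ := A.card with hk0
  have hAne : A.Nonempty := by
    by_contra hc
    rw [Finset.not_nonempty_iff_eq_empty] at hc
    apply hne
    apply perm_le_id_eq_one hζ
    intro x
    by_contra h2
    push_neg at h2
    have : x ∈ A := (hmemA x).mpr h2
    rw [hc] at this
    exact absurd this (Finset.notMem_empty x)
  have hk0pos : 0 < k0 := Finset.card_pos.mpr hAne
  have hAIcc : A ⊆ Finset.Icc 1 N := by
    intro x hx
    rw [Finset.mem_Icc]
    exact ⟨x.one_le, hAsub x hx⟩
  set C : Finset ℕ+ := Finset.Icc 1 N \ A with hC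
  have hIccCard : (Finset.Icc (1 : ℕ+) N).card = (N : ℕ) := by
    rw [PNat.card_Icc]
    simp
  have hk0N : k0 ≤ (N : ℕ) := by
    rw [hk0, ← hIccCard]
    exact Finset.card_le_card hAIcc
  have hCcard : C.card = (N : ℕ) - k0 := by
    rw [hC, Finset.card_sdiff_of_subset hAIcc, hIccCard]
  set isoA := A.orderIsoOfFin (rfl : A.card = k0) with hisoA
  set isoC := C.orderIsoOfFin (rfl : C.card = C.card) with hisoC
  set f : ℕ+ → ℕ+ := fun i =>
    if h1 : (i : ℕ) ≤ k0 then
      (isoA ⟨k0 - (i : ℕ), Nat.sub_lt hk0pos i.2⟩ : ℕ+)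
    else if h2 : (i : ℕ) ≤ (N : ℕ) then
      (isoC ⟨(N : ℕ) - (i : ℕ), by
        rw [hCcard]
        exact Nat.sub_lt_sub_left (lt_of_lt_of_le (not_le.mp h1) h2) (not_le.mp h1)⟩ : ℕ+)
    else i
    with hf
  have hfA : ∀ (i : ℕ+) (h1 : (i : ℕ) ≤ k0),
      f i = (isoA ⟨k0 - (i : ℕ), Nat.sub_lt hk0pos i.2⟩ : ℕ+) := by
    intro i h1
    rw [hf]
    simp only [dif_pos h1]
  have hfAmem : ∀ (i : ℕ+), (i : ℕ) ≤ k0 → f i ∈ A := by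
    intro i h1
    rw [hfA i h1]
    exact (isoA _).2
  have hfC : ∀ (i : ℕ+) (h1 : ¬ (i : ℕ) ≤ k0) (h2 : (i : ℕ) ≤ (N : ℕ)),
      f i = (isoC ⟨(N : ℕ) - (i : ℕ), by
        rw [hCcard]
        exact Nat.sub_lt_sub_left (lt_of_lt_of_le (not_le.mp h1) h2) (not_le.mp h1)⟩ : ℕ+) := by
    intro i h1 h2
    rw [hf]
    simp only [dif_neg h1, dif_pos h2]
  have hfCmem : ∀ (i : ℕ+), k0 < (i : ℕ) → (i : ℕ) ≤ (N : ℕ) → f i ∈ C := by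
    intro i h1 h2
    rw [hfC i (not_le.mpr h1) h2]
    exact (isoC _).2
  have hfid : ∀ (i : ℕ+), (N : ℕ) < (i : ℕ) → f i = i := by
    intro i h1
    rw [hf]
    simp only [dif_neg (not_le.mpr (lt_of_le_of_lt hk0N h1)), dif_neg (not_le.mpr h1)]
  have hAmemN : ∀ x : ℕ+, x ∈ A → (x : ℕ) ≤ (N : ℕ) := fun x hx => hAsub x hx
  have hCmemN : ∀ x : ℕ+, x ∈ C → (x : ℕ) ≤ (N : ℕ) := by
    intro x hx
    rw [hC, Finset.mem_sdiff, Finset.mem_Icc] at hx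
    exact hx.1.2
  -- strict decrease within blocks
  have hdecA : ∀ i j : ℕ+, i < j → (j : ℕ) ≤ k0 → f j < f i := by
    intro i j hij hj
    have hi : (i : ℕ) ≤ k0 := le_of_lt (lt_of_lt_of_le ((PNat.coe_lt_coe i j).mpr hij) hj)
    rw [hfA i hi, hfA j hj]
    refine Subtype.coe_lt_coe.mpr ?_
    apply (OrderIso.lt_iff_lt isoA).mpr
    rw [Fin.mk_lt_mk]
    have h1 := (PNat.coe_lt_coe i j).mpr hij
    have h2 := i.2
    omega
  have hdecC : ∀ i j : ℕ+, i < j → k0 < (i : ℕ) → (j : ℕ) ≤ (N : ℕ) → f j < f i := by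
    intro i j hij hi hj
    have hcij := (PNat.coe_lt_coe i j).mpr hij
    rw [hfC i (not_le.mpr hi) (by omega), hfC j (by omega : ¬ (j : ℕ) ≤ k0) hj]
    refine Subtype.coe_lt_coe.mpr ?_
    apply (OrderIso.lt_iff_lt isoC).mpr
    rw [Fin.mk_lt_mk]
    omega
  -- injectivity
  have hAC_disj : ∀ x : ℕ+, x ∈ A → x ∈ C → False := by
    intro x hxA hxC
    rw [hC, Finset.mem_sdiff] at hxC
    exact hxC.2 hxA
  have hinj : Function.Injective f := by
    intro i j hij
    by_contra hne2
    rcases (lt_or_gt_of_ne hne2) with h | h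
    · by_cases hj : (j : ℕ) ≤ k0
      · exact absurd hij (ne_of_gt (hdecA i j h hj))
      · push_neg at hj
        by_cases hjN : (j : ℕ) ≤ (N : ℕ)
        · by_cases hi : (i : ℕ) ≤ k0
          · exact hAC_disj (f i) (hfAmem i hi) (hij ▸ hfCmem j hj hjN)
          · push_neg at hi
            exact absurd hij (ne_of_gt (hdecC i j h hi hjN))
        · push_neg at hjN
          rw [hfid j hjN] at hij
          by_cases hi : (i : ℕ) ≤ k0
          · have := hAmemN _ (hfAmem i hi)
            rw [hij] at this
            omega
          · push_neg at hi
            by_cases hiN : (i : ℕ) ≤ (N : ℕ)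
            · have := hCmemN _ (hfCmem i hi hiN)
              rw [hij] at this
              omega
            · push_neg at hiN
              rw [hfid i hiN] at hij
              exact hne2 hij
    · -- symmetric
      by_cases hi : (i : ℕ) ≤ k0
      · by_cases hj : (j : ℕ) ≤ k0
        · exact absurd hij (ne_of_lt (hdecA j i h hi))
        · push_neg at hj
          by_cases hjN : (j : ℕ) ≤ (N : ℕ)
          · exact hAC_disj (f i) (hfAmem i hi) (hij ▸ hfCmem j hj hjN)
          · push_neg at hjN
            rw [hfid j hjN] at hij
            have := hAmemN _ (hfAmem i hi)
            rw [hij] at this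
            omega
      · push_neg at hi
        by_cases hiN : (i : ℕ) ≤ (N : ℕ)
        · by_cases hj : (j : ℕ) ≤ k0
          · exact hAC_disj (f j) (hfAmem j hj) (hij ▸ hfCmem i hi hiN)
          · push_neg at hj
            by_cases hjN : (j : ℕ) ≤ (N : ℕ)
            · exact absurd hij.symm (ne_of_gt (hdecC j i h hj hiN))
            · push_neg at hjN
              rw [hfid j hjN] at hij
              have := hCmemN _ (hfCmem i hi hiN)
              rw [hij] at this
              omega
        · push_neg at hiN
          rw [hfid i hiN] at hij
          by_cases hj : (j : ℕ) ≤ k0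
          · have := hAmemN _ (hfAmem j hj)
            rw [← hij] at this
            omega
          · push_neg at hj
            by_cases hjN : (j : ℕ) ≤ (N : ℕ)
            · have := hCmemN _ (hfCmem j hj hjN)
              rw [← hij] at this
              omega
            · push_neg at hjN
              rw [hfid j hjN] at hij
              exact hne2 hij
  -- surjectivity
  have hsurj : Function.Surjective f := by
    intro y
    by_cases hyA : y ∈ A
    · set j := isoA.symm ⟨y, hyA⟩ with hj
      have hjlt : (j : ℕ) < k0 := j.isLt
      set i0 : ℕ+ := ⟨k0 - (j : ℕ), by omega⟩ with hi0
      have hi0coe : (i0 : ℕ) = k0 - (j : ℕ) := rfl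
      refine ⟨i0, ?_⟩
      have hi1 : (i0 : ℕ) ≤ k0 := by omega
      rw [hfA i0 hi1]
      have hidx : (⟨k0 - (i0 : ℕ), Nat.sub_lt hk0pos i0.2⟩ : Fin k0) = j := by
        apply Fin.ext
        show k0 - (i0 : ℕ) = (j : ℕ)
        omega
      rw [hidx, hj, OrderIso.apply_symm_apply]
    · by_cases hyN : (y : ℕ) ≤ (N : ℕ)
      · have hyC : y ∈ C := by
          rw [hC, Finset.mem_sdiff, Finset.mem_Icc]
          exact ⟨⟨y.one_le, hyN⟩, hyA⟩
        set j := isoC.symm ⟨y, hyC⟩ with hj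
        have hjlt : (j : ℕ) < C.card := j.isLt
        have hjlt2 : (j : ℕ) < (N : ℕ) - k0 := by rw [← hCcard]; exact hjlt
        set i0 : ℕ+ := ⟨(N : ℕ) - (j : ℕ), by omega⟩ with hi0
        have hi0coe : (i0 : ℕ) = (N : ℕ) - (j : ℕ) := rfl
        refine ⟨i0, ?_⟩
        have hi1 : ¬ (i0 : ℕ) ≤ k0 := by omega
        have hi2 : (i0 : ℕ) ≤ (N : ℕ) := by omega
        rw [hfC i0 hi1 hi2]
        have hidx : (⟨(N : ℕ) - (i0 : ℕ), by
            rw [hCcard]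
            exact Nat.sub_lt_sub_left (lt_of_lt_of_le (not_le.mp hi1) hi2) (not_le.mp hi1)⟩ :
            Fin C.card) = j := by
          apply Fin.ext
          show (N : ℕ) - (i0 : ℕ) = (j : ℕ)
          omega
        rw [hidx, hj, OrderIso.apply_symm_apply]
      · push_neg at hyN
        exact ⟨y, hfid y hyN⟩
  set u : Sinf := Equiv.ofBijective f ⟨hinj, hsurj⟩ with hu
  have hueval : ∀ i : ℕ+, u i = f i := fun i => rfl
  have hufin : FinSupp u := by
    apply (Set.finite_Iic N).subset
    intro i hi
    simp only [Set.mem_setOf_eq, hueval] at hi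
    rw [Set.mem_Iic]
    by_contra h
    push_neg at h
    exact hi (hfid i ((PNat.coe_lt_coe N i).mpr h))
  set k : ℕ+ := ⟨k0, hk0pos⟩ with hk
  have hkcoe : (k : ℕ) = k0 := rfl
  refine ⟨u, k, hufin, ?_, ?_⟩
  · -- CondI
    intro x
    constructor
    · intro hx
      have hx' : (x : ℕ) ≤ k0 := hx
      have hmem := hfAmem x hx'
      rw [hmemA] at hmem
      show u x ≤ ζ (u x)
      rw [hueval]
      exact le_of_lt hmem
    · intro hx
      have hx' : k0 < (x : ℕ) := hx
      show ζ (u x) ≤ u x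
      rw [hueval]
      by_cases hxN : (x : ℕ) ≤ (N : ℕ)
      · have hm := hfCmem x hx' hxN
        rw [hC, Finset.mem_sdiff] at hm
        have h2 : ¬ f x < ζ (f x) := fun h => hm.2 ((hmemA _).mpr h)
        exact not_lt.mp h2
      · push_neg at hxN
        have hx2 := (PNat.coe_lt_coe N x).mpr hxN
        rw [hfid x hx2, hN x hx2]
  · -- CondII
    intro x y hxy huxy hwinv
    show x ≤ k ∧ k < y
    rw [hueval, hueval] at huxy
    have hwx : (ζ * u) x = ζ (f x) := rfl
    have hwy : (ζ * u) y = ζ (f y) := rfl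
    rw [hwx, hwy] at hwinv
    by_cases hxk : (x : ℕ) ≤ k0
    · by_cases hyk : (y : ℕ) ≤ k0
      · exact absurd huxy (not_lt.mpr (le_of_lt (hdecA x y hxy hyk)))
      · push_neg at hyk
        exact ⟨hxk, hyk⟩
    · push_neg at hxk
      exfalso
      have hcxy := (PNat.coe_lt_coe x y).mpr hxy
      by_cases hyN : (y : ℕ) ≤ (N : ℕ)
      · exact absurd huxy (not_lt.mpr (le_of_lt (hdecC x y hxy hxk hyN)))
      · push_neg at hyN
        have hfy : f y = y := hfid y hyN
        have hzy : ζ y = y := hN y ((PNat.coe_lt_coe N y).mpr hyN)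
        rw [hfy, hzy] at hwinv
        by_cases hxN : (x : ℕ) ≤ (N : ℕ)
        · have hfxN : (f x : ℕ) ≤ (N : ℕ) := by
            by_cases h : (x : ℕ) ≤ k0
            · exact hAmemN _ (hfAmem x h)
            · push_neg at h
              exact hCmemN _ (hfCmem x h hxN)
          have : ζ (f x) ≤ N := hcl (f x) hfxN
          have hNy : (N : ℕ) < (y : ℕ) := hyN
          have : (ζ (f x) : ℕ) ≤ (N : ℕ) := this
          have hyz := (PNat.coe_lt_coe y (ζ (f x))).mpr hwinv
          omega
        · push_neg at hxN
          rw [hfid x ((PNat.coe_lt_coe N x).mpr hxN),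
            hN x ((PNat.coe_lt_coe N x).mpr hxN)] at hwinv
          exact absurd (lt_trans hxy hwinv) (lt_irrefl _)

end swaplen
end BS
end
/-- For every `ζ ∈ S∞` there are `u ∈ S∞` and `k ≥ 1` with
`u ≤ₖ ζu`; the quantity `ℓ(ζu) − ℓ(u)` is the same for all such pairs, so
`ℓᵤ(ζ) := ℓ(ζu) − ℓ(u)` is well defined. -/
theorem universal_length_well_defined (ζ : Sinf) (hζ : FinSupp ζ) :
    (∃ u : Sinf, FinSupp u ∧ ∃ k : ℕ+, kBruhat k u (ζ * u)) ∧
    (∀ u u' : Sinf, ∀ k k' : ℕ+, FinSupp u → FinSupp u' →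
      kBruhat k u (ζ * u) → kBruhat k' u' (ζ * u') →
      len (ζ * u) - len u = len (ζ * u') - len u') ∧
    (∀ u : Sinf, ∀ k : ℕ+, FinSupp u → kBruhat k u (ζ * u) →
      ellU ζ = len (ζ * u) - len u) := by
  have hex : ∃ u : Sinf, FinSupp u ∧ ∃ k : ℕ+, kBruhat k u (ζ * u) := by
    by_cases h1 : ζ = 1
    · refine ⟨1, BS.finSupp_one, 1, ?_⟩
      rw [h1, one_mul]
      exact Relation.ReflTransGen.refl
    · obtain ⟨u, k, hu, hI, hII⟩ := BS.exists_good_u hζ h1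
      have hw : FinSupp (ζ * u) := BS.finSupp_mul hζ hu
      exact ⟨u, hu, k, BS.cond_to_chain hu (len (ζ * u)) (ζ * u) rfl hw hI hII⟩
  have huniq : ∀ (u : Sinf) (k : ℕ+), FinSupp u → kBruhat k u (ζ * u) →
      (len (ζ * u) + ((BS.Inv ζ).ncard - BS.NP ζ) = len u + BS.NP ζ ∧
       BS.NP ζ ≤ (BS.Inv ζ).ncard ∧ len u ≤ len (ζ * u)) := by
    intro u k hu hbr
    obtain ⟨hwfin, hlen, hI, hII⟩ := BS.chain_props hu hbr
    have hcomp : ∀ x, ζ (u x) = (ζ * u) x := fun x => rfl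
    obtain ⟨e1, e2⟩ := BS.count_master hu hζ hcomp hI hII
    exact ⟨e1, e2, hlen⟩
  refine ⟨hex, ?_, ?_⟩
  · intro u u' k k' hu hu' hb hb'
    obtain ⟨e1, e2, e3⟩ := huniq u k hu hb
    obtain ⟨f1, f2, f3⟩ := huniq u' k' hu' hb'
    omega
  · intro u k hu hb
    have hp : ∃ p : Sinf × ℕ+, FinSupp p.1 ∧ kBruhat p.2 p.1 (ζ * p.1) := by
      obtain ⟨u0, hu0, k0, hb0⟩ := hex
      exact ⟨(u0, k0), hu0, hb0⟩
    rw [ellU, dif_pos hp]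
    obtain ⟨hs1, hs2⟩ := hp.choose_spec
    obtain ⟨e1, e2, e3⟩ := huniq hp.choose.1 hp.choose.2 hs1 hs2
    obtain ⟨f1, f2, f3⟩ := huniq u k hu hb
    omega
end

section
/- For u, w ∈ S∞ and k ≥ 1, one has u ≤_k w in the k-Bruhat order if and only if: (1) u(i) ≤ w(i) for every i ≤ k; (2) u(i) ≥ w(i) for every i > k; and (3) for all i < j with either j ≤ k or k < i, if u(i) < u(j) then w(i) < w(j). -/
/-
The three conditions define a preorder on `S∞` (for fixed `k`). A cover `v ⋖ₖ v·(a b)` satisfies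
them because `ℓ(v·(a b)) = ℓ(v) + 1` exactly when `v a < v b` and no `c` strictly between `a` and
`b` has `v a < v c < v b`; this comes from counting which inversions change, which gives
`ℓ(v·(a b)) - ℓ(v) = sgn(v b - v a) + Σ_{a<c<b} (sgn(v c - v a) + sgn(v b - v c))`.

Conversely, let `u ≠ w` satisfy the conditions. Choose `a ≤ k` with `u a < w a` and `u a` maximal,
then `b > k` with `w b ≤ u a < u b ≤ w a` and `u b` minimal; such a `b` exists because `u` and `w`
have equally many preimages of `(u a, w a]`, and `a` is one of `w` but not of `u`. The extremal
choices make `u·(a b)` a `k`-cover of `u` that still satisfies the conditions with respect to `w`,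
and it lowers `Σ_{i ≤ k} (w i - u i)`, so induction finishes.
-/

open Equiv Finset

namespace Equiv.Perm

variable {α : Type*} [DecidableEq α] (v : Perm α) {a b x : α}

@[simp]
theorem mul_swap_apply_left : (v * swap a b) a = v b := by
  rw [mul_apply, swap_apply_left]

@[simp]
theorem mul_swap_apply_right : (v * swap a b) b = v a := by
  rw [mul_apply, swap_apply_right]

theorem mul_swap_apply_of_ne_of_ne (hxa : x ≠ a) (hxb : x ≠ b) : (v * swap a b) x = v x := by
  rw [mul_apply, swap_apply_of_ne_of_ne hxa hxb]

end Equiv.Perm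

theorem Equiv.exists_apply_mem_and_apply_notMem {α β : Type*} {u w : α ≃ β} {s : Finset β}
    (h : ∃ a, w a ∈ s ∧ u a ∉ s) : ∃ c, u c ∈ s ∧ w c ∉ s := by
  by_contra! hsub
  obtain ⟨a, hwa, hua⟩ := h
  have hST : s.map u.symm.toEmbedding ⊆ s.map w.symm.toEmbedding := fun x hx => by
    simp only [mem_map_equiv, symm_symm] at hx ⊢
    exact hsub x hx
  have hST := eq_of_subset_of_card_le hST (by simp)
  have ha : a ∈ s.map w.symm.toEmbedding := mem_map_equiv.2 (by simpa using hwa)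
  rw [← hST, mem_map_equiv, symm_symm] at ha
  exact hua ha

theorem Finset.sum_sum_eq_of_eq_zero_off_pair {α β : Type*} [DecidableEq α] [AddCommMonoid β]
    {s : Finset α} {a b : α} (ha : a ∈ s) (hb : b ∈ s) (hab : a ≠ b) (f : α → α → β)
    (hf : ∀ i j, i ≠ a → i ≠ b → j ≠ a → j ≠ b → f i j = 0) :
    ∑ i ∈ s, ∑ j ∈ s, f i j = f a a + f a b + f b a + f b b +
      ∑ c ∈ (s.erase a).erase b, (f a c + f b c + f c a + f c b) := by
  set C := (s.erase a).erase b
  have hbC : b ∉ C := fun h => (mem_erase.1 h).1 rfl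
  have haC : a ∉ insert b C := by simp [C, hab]
  have hs : s = insert a (insert b C) := by simp [C, insert_erase, mem_erase.2 ⟨hab.symm, hb⟩, ha]
  have hC : ∀ c ∈ C, ∑ j ∈ C, f c j = 0 := fun c hc => sum_eq_zero fun j hj => by
    simp only [C, mem_erase] at hc hj
    exact hf c j hc.2.1 hc.1 hj.2.1 hj.1
  rw [hs, sum_insert haC, sum_insert hbC, sum_insert haC, sum_insert hbC]
  simp only [sum_insert haC, sum_insert hbC, sum_add_distrib, sum_congr rfl hC, sum_const_zero]
  abel

section OrderSign

variable {α : Type*} [LinearOrder α] {x y z : α}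

def orderSign (x y : α) : ℤ := (if x < y then 1 else 0) - (if y < x then 1 else 0)

theorem orderSign_of_lt (h : x < y) : orderSign x y = 1 := by
  simp [orderSign, h, h.not_gt]

theorem orderSign_of_gt (h : y < x) : orderSign x y = -1 := by
  simp [orderSign, h, h.not_gt]

theorem orderSign_add_orderSign_of_lt (hxy : x < y) (hzx : z ≠ x) (hzy : z ≠ y) :
    orderSign x z + orderSign z y = if x < z ∧ z < y then 2 else 0 := by
  rcases hzx.lt_or_gt with hz | hz
  · simp [orderSign, hz, hz.not_gt, hz.trans hxy, (hz.trans hxy).not_gt]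
  rcases hzy.lt_or_gt with hz' | hz'
  · simp [orderSign, hz, hz.not_gt, hz', hz'.not_gt]
  · simp [orderSign, hz', hz'.not_gt, hxy.trans hz', (hxy.trans hz').not_gt]

theorem orderSign_add_orderSign_nonpos (hyx : y < x) : orderSign x z + orderSign z y ≤ 0 := by
  unfold orderSign
  split_ifs <;> (try norm_num) <;> order

end OrderSign

section FiniteSupport

variable {u v w : Sinf}

theorem FinSupp.mul_swap (hv : FinSupp v) (a b : ℕ+) : FinSupp (v * swap a b) := by
  refine (hv.union (Set.toFinite {a, b})).subset fun x hx => ?_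
  rcases Perm.set_support_mul_subset v (swap a b) hx with hx | hx
  · exact Or.inl hx
  · by_contra hab
    simp only [Set.mem_union, Set.mem_insert_iff, Set.mem_singleton_iff, not_or] at hab
    exact hx (swap_apply_of_ne_of_ne hab.2.1 hab.2.2)

theorem FinSupp.exists_lt_forall_le_apply_eq (hv : FinSupp v) (m : ℕ+) :
    ∃ N, m < N ∧ ∀ x, N ≤ x → v x = x := by
  obtain ⟨M, hM⟩ := hv.bddAbove
  refine ⟨max M m + 1, (le_max_right M m).trans_lt (PNat.lt_add_right _ _), fun x hx => ?_⟩
  by_contra hvx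
  exact (hM hvx |>.trans (le_max_left M m) |>.trans_lt (PNat.lt_add_right _ _)).not_ge hx

theorem FinSupp.eq_of_forall_apply_le (hu : FinSupp u) (hw : FinSupp w) (h : ∀ i, w i ≤ u i) :
    w = u := by
  set s := (hu.union hw).toFinset
  have hs : ∀ σ : Sinf, {x | σ x ≠ x} ⊆ {x | u x ≠ x} ∪ {x | w x ≠ x} →
      ∑ i ∈ s, (σ i : ℕ) = ∑ i ∈ s, (i : ℕ) := fun σ hσ =>
    Perm.sum_comp σ s (fun i => (i : ℕ)) (by simpa [s] using hσ)
  have hsum : ∑ i ∈ s, (w i : ℕ) = ∑ i ∈ s, (u i : ℕ) := by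
    rw [hs w Set.subset_union_right, hs u Set.subset_union_left]
  ext i
  by_cases hi : i ∈ s
  · exact PNat.eq ((Finset.sum_eq_sum_iff_of_le fun j _ => PNat.coe_le_coe _ _ |>.2 (h j)).1
      hsum i hi)
  · simp only [s, Set.Finite.mem_toFinset, Set.mem_union,
      Set.mem_ofPred_eq, not_or, not_not] at hi
    rw [hi.1, hi.2]

theorem FinSupp.of_kCover {k : ℕ+} (hv : FinSupp v) (h : kCover k v w) : FinSupp w := by
  obtain ⟨-, a, b, -, -, rfl⟩ := h
  exact hv.mul_swap a b

theorem FinSupp.of_kBruhat {k : ℕ+} (hu : FinSupp u) (h : kBruhat k u w) : FinSupp w := by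
  induction h with
  | refl => exact hu
  | tail _ hcov ih => exact ih.of_kCover hcov

end FiniteSupport

section Length

variable {v : Sinf} {N a b : ℕ+}

def invInd (v : Sinf) (i j : ℕ+) : ℤ := if i < j ∧ v j < v i then 1 else 0

theorem apply_lt_of_forall_le_apply_eq (hN : ∀ x, N ≤ x → v x = x) {x : ℕ+} (hx : x < N) :
    v x < N := by
  by_contra h
  rw [not_lt] at h
  exact (v.injective (hN _ h) ▸ h).not_gt hx

theorem lt_of_inversion (hN : ∀ x, N ≤ x → v x = x) {i j : ℕ+} (hij : i < j)
    (hv : v j < v i) : j < N := by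
  by_contra hj
  rw [not_lt] at hj
  rw [hN j hj] at hv
  have hi : N ≤ i := not_lt.1 fun hi => (apply_lt_of_forall_le_apply_eq hN hi).not_ge
    (hj.trans hv.le)
  rw [hN i hi] at hv
  exact hv.not_gt hij

theorem len_eq_sum_Iio (hN : ∀ x, N ≤ x → v x = x) :
    (len v : ℤ) = ∑ i ∈ Iio N, ∑ j ∈ Iio N, invInd v i j := by
  have hset : {p : ℕ+ × ℕ+ | p.1 < p.2 ∧ v p.2 < v p.1} =
      ↑((Iio N ×ˢ Iio N).filter fun p => p.1 < p.2 ∧ v p.2 < v p.1) := by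
    ext ⟨i, j⟩
    simp only [Set.mem_ofPred_eq, coe_filter, mem_product, mem_Iio]
    constructor
    · rintro ⟨hij, hv⟩
      exact ⟨⟨hij.trans (lt_of_inversion hN hij hv), lt_of_inversion hN hij hv⟩, hij, hv⟩
    · exact fun h => h.2
  rw [len, hset, Set.ncard_coe_finset, card_filter, sum_product]
  push_cast [invInd]
  rfl

theorem len_mul_swap (hv : FinSupp v) (hab : a < b) :
    (len (v * swap a b) : ℤ) = len v + orderSign (v a) (v b) +
      ∑ c ∈ Ioo a b, (orderSign (v a) (v c) + orderSign (v c) (v b)) := by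
  obtain ⟨N, hbN, hN⟩ := hv.exists_lt_forall_le_apply_eq b
  have haN := hab.trans hbN
  have hsN : ∀ x, N ≤ x → (v * swap a b) x = x := fun x hx => by
    rw [v.mul_swap_apply_of_ne_of_ne (haN.trans_le hx).ne' (hbN.trans_le hx).ne', hN x hx]
  set f : ℕ+ → ℕ+ → ℤ := fun i j => invInd (v * swap a b) i j - invInd v i j
  have hf : ∀ i j, i ≠ a → i ≠ b → j ≠ a → j ≠ b → f i j = 0 := fun i j hia hib hja hjb => by
    simp [f, invInd, swap_apply_of_ne_of_ne, *]
  have hdiff : (len (v * swap a b) : ℤ) - len v = ∑ i ∈ Iio N, ∑ j ∈ Iio N, f i j := by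
    simp only [f, len_eq_sum_Iio hN, len_eq_sum_Iio hsN, ← sum_sub_distrib]
  rw [sum_sum_eq_of_eq_zero_off_pair (mem_Iio.2 haN) (mem_Iio.2 hbN) hab.ne f hf] at hdiff
  have hpair : f a a + f a b + f b a + f b b = orderSign (v a) (v b) := by
    simp [f, invInd, orderSign, hab, hab.not_gt]
  have hsub : Ioo a b ⊆ ((Iio N).erase a).erase b := fun c hc => by
    obtain ⟨hac, hcb⟩ := mem_Ioo.1 hc
    simp [hac.ne', hcb.ne, hcb.trans hbN]
  have hout : ∀ c ∈ ((Iio N).erase a).erase b, c ∉ Ioo a b →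
      f a c + f b c + f c a + f c b = 0 := fun c hc hcab => by
    simp only [mem_erase] at hc
    rcases (mem_Ioo.not.1 hcab |> not_and_or.1) with hca | hcb
    · have hca : c < a := (not_lt.1 hca).lt_of_ne hc.2.1
      simp [f, invInd, swap_apply_of_ne_of_ne hc.2.1 hc.1, hca, hca.trans hab, hca.not_gt,
        (hca.trans hab).not_gt]
    · have hbc : b < c := (not_lt.1 hcb).lt_of_ne' hc.1
      simp [f, invInd, swap_apply_of_ne_of_ne hc.2.1 hc.1, hbc, hab.trans hbc, hbc.not_gt,
        (hab.trans hbc).not_gt]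
  have hin : ∀ c ∈ Ioo a b, f a c + f b c + f c a + f c b =
      orderSign (v a) (v c) + orderSign (v c) (v b) := fun c hc => by
    obtain ⟨hac, hcb⟩ := mem_Ioo.1 hc
    simp [f, invInd, orderSign, swap_apply_of_ne_of_ne hac.ne' hcb.ne, hac, hcb, hac.not_gt,
      hcb.not_gt]
    ring
  rw [← sum_subset hsub hout, sum_congr rfl hin, hpair] at hdiff
  linarith

theorem len_mul_swap_eq_succ_iff (hv : FinSupp v) (hab : a < b) :
    len (v * swap a b) = len v + 1 ↔
      v a < v b ∧ ∀ c, a < c → c < b → ¬(v a < v c ∧ v c < v b) := by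
  have hlen := len_mul_swap hv hab
  rcases (v.injective.ne hab.ne).lt_or_gt with hlt | hgt
  · have hterm : ∀ c ∈ Ioo a b, orderSign (v a) (v c) + orderSign (v c) (v b) =
        if v a < v c ∧ v c < v b then 2 else 0 := fun c hc =>
      orderSign_add_orderSign_of_lt hlt (v.injective.ne (mem_Ioo.1 hc).1.ne')
        (v.injective.ne (mem_Ioo.1 hc).2.ne)
    rw [orderSign_of_lt hlt, sum_congr rfl hterm] at hlen
    have hnonneg : ∀ c ∈ Ioo a b, (0 : ℤ) ≤ if v a < v c ∧ v c < v b then 2 else 0 :=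
      fun _ _ => by split_ifs <;> norm_num
    rw [show len (v * swap a b) = len v + 1 ↔
        ∑ c ∈ Ioo a b, (if v a < v c ∧ v c < v b then (2 : ℤ) else 0) = 0 by omega,
      sum_eq_zero_iff_of_nonneg hnonneg]
    simp [hlt]
  · have hsum := sum_nonpos fun c (_ : c ∈ Ioo a b) =>
      orderSign_add_orderSign_nonpos (z := v c) hgt
    rw [orderSign_of_gt hgt] at hlen
    exact iff_of_false (by omega) fun h => h.1.not_gt hgt

end Length

def kDefect (k : ℕ+) (u w : Sinf) : ℕ := ∑ i ∈ Iic k, ((w i : ℕ) - u i)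

theorem kDefect_mul_swap_lt {k a b : ℕ+} {u w : Sinf} (hak : a ≤ k) (hkb : k < b)
    (hab : u a < u b) (hbw : u b ≤ w a) : kDefect k (u * swap a b) w < kDefect k u w := by
  have hab : (u a : ℕ) < u b := hab
  have hbw : (u b : ℕ) ≤ w a := hbw
  refine sum_lt_sum (fun i hi => ?_) ⟨a, mem_Iic.2 hak, ?_⟩
  · rcases eq_or_ne i a with rfl | hia
    · rw [u.mul_swap_apply_left]
      omega
    · rw [u.mul_swap_apply_of_ne_of_ne hia ((mem_Iic.1 hi).trans_lt hkb).ne]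
  · rw [u.mul_swap_apply_left]
    omega

structure KBruhatCond (k : ℕ+) (u w : Sinf) : Prop where
  apply_le : ∀ i, i ≤ k → u i ≤ w i
  apply_ge : ∀ i, k < i → w i ≤ u i
  lt_of_lt : ∀ i j, i < j → (j ≤ k ∨ k < i) → u i < u j → w i < w j

namespace KBruhatCond

variable {k a b : ℕ+} {u v w : Sinf}

theorem refl (k : ℕ+) (u : Sinf) : KBruhatCond k u u :=
  ⟨fun _ _ => le_rfl, fun _ _ => le_rfl, fun _ _ _ _ h => h⟩

theorem trans (huv : KBruhatCond k u v) (hvw : KBruhatCond k v w) : KBruhatCond k u w :=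
  ⟨fun i hi => (huv.apply_le i hi).trans (hvw.apply_le i hi),
    fun i hi => (hvw.apply_ge i hi).trans (huv.apply_ge i hi),
    fun i j hij hside h => hvw.lt_of_lt i j hij hside (huv.lt_of_lt i j hij hside h)⟩

theorem of_kCover (hv : FinSupp v) (h : kCover k v w) : KBruhatCond k v w := by
  obtain ⟨hlen, a, b, hak, hkb, rfl⟩ := h
  have hab := hak.trans_lt hkb
  obtain ⟨hvab, hmid⟩ := (len_mul_swap_eq_succ_iff hv hab).1 hlen
  refine ⟨fun i hi => ?_, fun i hi => ?_, fun i j hij hside hvij => ?_⟩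
  · rcases eq_or_ne i a with rfl | hia
    · simpa using hvab.le
    · rw [v.mul_swap_apply_of_ne_of_ne hia (hi.trans_lt hkb).ne]
  · rcases eq_or_ne i b with rfl | hib
    · simpa using hvab.le
    · rw [v.mul_swap_apply_of_ne_of_ne (hak.trans_lt hi).ne' hib]
  rcases eq_or_ne i a with rfl | hia
  · have hjb : j < b := (hside.resolve_right hak.not_gt).trans_lt hkb
    rw [v.mul_swap_apply_left, v.mul_swap_apply_of_ne_of_ne hij.ne' hjb.ne]
    exact (not_lt.1 fun h => hmid j hij hjb ⟨hvij, h⟩).lt_of_ne (v.injective.ne hjb.ne')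
  rcases eq_or_ne j a with rfl | hja
  · rw [v.mul_swap_apply_of_ne_of_ne hia (hij.trans hab).ne, v.mul_swap_apply_left]
    exact hvij.trans hvab
  rcases eq_or_ne i b with rfl | hib
  · rw [v.mul_swap_apply_right, v.mul_swap_apply_of_ne_of_ne hja hij.ne']
    exact hvab.trans hvij
  rcases eq_or_ne j b with rfl | hjb
  · have hai : a < i := hak.trans_lt (hside.resolve_left hkb.not_ge)
    rw [v.mul_swap_apply_of_ne_of_ne hia hib, v.mul_swap_apply_right]
    exact (not_lt.1 fun h => hmid i hai hij ⟨h, hvij⟩).lt_of_ne (v.injective.ne hia)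
  rw [v.mul_swap_apply_of_ne_of_ne hia hib, v.mul_swap_apply_of_ne_of_ne hja hjb]
  exact hvij

theorem of_kBruhat (hu : FinSupp u) (h : kBruhat k u w) : KBruhatCond k u w := by
  induction h with
  | refl => exact refl k u
  | tail hb hcov ih => exact ih.trans (of_kCover (hu.of_kBruhat hb) hcov)

theorem exists_left (hc : KBruhatCond k u w) (hu : FinSupp u) (hw : FinSupp w) (hne : u ≠ w) :
    ∃ a ≤ k, u a < w a ∧ ∀ i ≤ k, u a < u i → w i = u i := by
  have hex : ((Iic k).filter fun i => u i < w i).Nonempty := by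
    rw [nonempty_iff_ne_empty, Ne, filter_eq_empty_iff]
    refine fun h => hne (hu.eq_of_forall_apply_le hw fun i => ?_).symm
    rcases le_or_gt i k with hik | hki
    · exact not_lt.1 (h (mem_Iic.2 hik))
    · exact hc.apply_ge i hki
  obtain ⟨a, ha, hmax⟩ := exists_max_image _ u hex
  simp only [mem_filter, mem_Iic] at ha hmax
  refine ⟨a, ha.1, ha.2, fun i hik hai => ?_⟩
  exact ((hc.apply_le i hik).lt_or_eq.resolve_left fun h => (hmax i ⟨hik, h⟩).not_gt hai).symm

theorem exists_right (hc : KBruhatCond k u w) (haw : u a < w a)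
    (hleft : ∀ i ≤ k, u a < u i → w i = u i) :
    ∃ b, k < b ∧ u a < u b ∧ u b ≤ w a ∧ w b ≤ u a ∧
      ∀ i, k < i → u a < u i → u i < u b → u a < w i := by
  obtain ⟨c, hcu, hcw⟩ := Equiv.exists_apply_mem_and_apply_notMem (u := u) (w := w)
    (s := Ioc (u a) (w a)) ⟨a, by simp [haw], by simp⟩
  rw [mem_Ioc] at hcu hcw
  have hwc : w c ≤ u a := by
    by_contra! hac
    have hwac := lt_of_not_ge (not_and.1 hcw hac)
    rcases le_or_gt c k with hck | hkc
    · exact (hleft c hck hcu.1 ▸ hwac).not_ge hcu.2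
    · exact (hwac.trans_le (hc.apply_ge c hkc)).not_ge hcu.2
  have hkc : k < c := lt_of_not_ge fun hck => ((hc.apply_le c hck).trans hwc).not_gt hcu.1
  obtain ⟨b, ⟨hkb, hwb, hab⟩, hmin⟩ := exists_minimalFor_of_wellFoundedLT
    (fun i => k < i ∧ w i ≤ u a ∧ u a < u i) u ⟨c, hkc, hwc, hcu.1⟩
  refine ⟨b, hkb, hab, ?_, hwb, fun i hki hai hib => lt_of_not_ge fun hwi => ?_⟩
  · exact ((le_total (u b) (u c)).elim id (hmin ⟨hkc, hwc, hcu.1⟩)).trans hcu.2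
  · exact hib.not_ge (hmin ⟨hki, hwi, hai⟩ hib.le)

theorem kCover_mul_swap (hc : KBruhatCond k u w) (hu : FinSupp u) (hak : a ≤ k) (hkb : k < b)
    (hab : u a < u b) (hbw : u b ≤ w a) (hwb : w b ≤ u a)
    (hleft : ∀ i ≤ k, u a < u i → w i = u i)
    (hright : ∀ i, k < i → u a < u i → u i < u b → u a < w i) :
    kCover k u (u * swap a b) := by
  refine ⟨(len_mul_swap_eq_succ_iff hu (hak.trans_lt hkb)).2 ⟨hab, ?_⟩, a, b, hak, hkb, rfl⟩
  rintro c hac hcb ⟨hac', hcb'⟩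
  rcases le_or_gt c k with hck | hkc
  · have hwac := hc.lt_of_lt a c hac (Or.inl hck) hac'
    rw [hleft c hck hac'] at hwac
    exact (hwac.trans hcb').not_ge hbw
  · exact ((hright c hkc hac' hcb').trans (hc.lt_of_lt c b hcb (Or.inr hkc) hcb')).not_ge hwb

theorem mul_swap (hc : KBruhatCond k u w) (hak : a ≤ k) (hkb : k < b)
    (huab : u a < u b) (hbw : u b ≤ w a) (hwb : w b ≤ u a)
    (hleft : ∀ i ≤ k, u a < u i → w i = u i)
    (hright : ∀ i, k < i → u a < u i → u i < u b → u a < w i) :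
    KBruhatCond k (u * swap a b) w := by
  have hab := hak.trans_lt hkb
  refine ⟨fun i hi => ?_, fun i hi => ?_, fun i j hij hside huij => ?_⟩
  · rcases eq_or_ne i a with rfl | hia
    · simpa using hbw
    · rw [u.mul_swap_apply_of_ne_of_ne hia (hi.trans_lt hkb).ne]
      exact hc.apply_le i hi
  · rcases eq_or_ne i b with rfl | hib
    · simpa using hwb
    · rw [u.mul_swap_apply_of_ne_of_ne (hak.trans_lt hi).ne' hib]
      exact hc.apply_ge i hi
  rcases eq_or_ne i a with rfl | hia
  · have hjb : j < b := (hside.resolve_right hak.not_gt).trans_lt hkb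
    rw [u.mul_swap_apply_left, u.mul_swap_apply_of_ne_of_ne hij.ne' hjb.ne] at huij
    exact hc.lt_of_lt i j hij hside (huab.trans huij)
  rcases eq_or_ne j a with rfl | hja
  · rw [u.mul_swap_apply_of_ne_of_ne hia (hij.trans hab).ne, u.mul_swap_apply_left] at huij
    rcases (u.injective.ne hia).lt_or_gt with hij' | hji'
    · exact hc.lt_of_lt i j hij hside hij'
    · rw [hleft i (hij.le.trans hak) hji']
      exact huij.trans_le hbw
  rcases eq_or_ne i b with rfl | hib
  · rw [u.mul_swap_apply_right, u.mul_swap_apply_of_ne_of_ne hja hij.ne'] at huij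
    rcases (u.injective.ne hij.ne').lt_or_gt with hji' | hij'
    · exact hwb.trans_lt (hright j (hkb.trans hij) huij hji')
    · exact hc.lt_of_lt i j hij hside hij'
  rcases eq_or_ne j b with rfl | hjb
  · rw [u.mul_swap_apply_of_ne_of_ne hia hib, u.mul_swap_apply_right] at huij
    exact hc.lt_of_lt i j hij hside (huij.trans huab)
  rw [u.mul_swap_apply_of_ne_of_ne hia hib, u.mul_swap_apply_of_ne_of_ne hja hjb] at huij
  exact hc.lt_of_lt i j hij hside huij

theorem exists_kCover (hc : KBruhatCond k u w) (hu : FinSupp u) (hw : FinSupp w) (hne : u ≠ w) :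
    ∃ v, kCover k u v ∧ KBruhatCond k v w ∧ kDefect k v w < kDefect k u w := by
  obtain ⟨a, hak, haw, hleft⟩ := hc.exists_left hu hw hne
  obtain ⟨b, hkb, huab, hbw, hwb, hright⟩ := hc.exists_right haw hleft
  exact ⟨u * swap a b, hc.kCover_mul_swap hu hak hkb huab hbw hwb hleft hright,
    hc.mul_swap hak hkb huab hbw hwb hleft hright, kDefect_mul_swap_lt hak hkb huab hbw⟩

theorem kBruhat {u : Sinf} (hc : KBruhatCond k u w) (hu : FinSupp u) (hw : FinSupp w) :
    kBruhat k u w := by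
  by_cases hne : u = w
  · exact hne ▸ .refl
  obtain ⟨v, hcov, hv, hlt⟩ := hc.exists_kCover hu hw hne
  exact .head hcov (hv.kBruhat (hu.of_kCover hcov) hw)
termination_by kDefect k u w

end KBruhatCond

/-- Theorem A of [BS97a]. Characterization of the `k`-Bruhat
order. -/
theorem kBruhat_characterization (k : ℕ+) (u w : Sinf)
    (hu : FinSupp u) (hw : FinSupp w) :
    kBruhat k u w ↔
      ((∀ i : ℕ+, i ≤ k → u i ≤ w i) ∧
       (∀ i : ℕ+, k < i → w i ≤ u i) ∧
       (∀ i j : ℕ+, i < j → (j ≤ k ∨ k < i) → u i < u j → w i < w j)) := by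
  refine ⟨fun h => ?_, fun ⟨h₁, h₂, h₃⟩ => KBruhatCond.kBruhat ⟨h₁, h₂, h₃⟩ hu hw⟩
  obtain ⟨h₁, h₂, h₃⟩ := KBruhatCond.of_kBruhat hu h
  exact ⟨h₁, h₂, h₃⟩
end
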